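/- arXiv:2512.11051 — 8 statements merged into one kernel-verified Lean document; each statement's English description precedes it below -/
import Mathlib

section
/- Assume Condition (6.1) and set σ_J² = Σ_{i∈I} α_i² σ_i². Then ∫_{{R₀ ≤ p}} (J·R₀)² dμ_Δ = 2σ_J² log p + O(1); that is, there exists a constant C' > 0 such that |∫_{{R₀ ≤ p}} (J·R₀)² dμ_Δ − 2σ_J² log p| ≤ C' for all integers p ≥ 1. -/
set_option maxHeartbeats 1000000


open MeasureTheory Filter Set Real Topology
open scoped ENNReal NNReal

noncomputable section

/-- The underlying set of the one-sided Young tower `Δ = {(z,ℓ) : z ∈ Z, 0 ≤ ℓ < τ(z)}`. -/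
def TowerSet {Z : Type*} (τ : Z → ℕ) : Set (Z × ℕ) := {p | p.2 < τ p.1}

/-- The tower map `f_Δ(z,ℓ) = (z,ℓ+1)` for `ℓ < τ(z) - 1` and `f_Δ(z,τ(z)-1) = (Fz,0)`. -/
def towerMap {Z : Type*} (F : Z → Z) (τ : Z → ℕ) (hτ : ∀ z, 0 < τ z)
    (x : TowerSet τ) : TowerSet τ :=
  if h : x.1.2 + 1 < τ x.1.1 then ⟨(x.1.1, x.1.2 + 1), h⟩
  else ⟨(F x.1.1, 0), hτ _⟩

/-- The tower measure `μ_Δ = (μ_Z × counting)/τ̄` where `τ̄ = ∫ τ dμ_Z`. -/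
def towerMeasure {Z : Type*} [MeasurableSpace Z] (μZ : Measure Z) (τ : Z → ℕ) :
    Measure (TowerSet τ) :=
  (ENNReal.ofReal (∫ z, (τ z : ℝ) ∂μZ))⁻¹ •
    Measure.comap Subtype.val (μZ.prod Measure.count)

/-- Separation time of the base map `F` with respect to the partition `P`:
the least `m ≥ 0` such that `F^m z` and `F^m z'` lie in distinct partition elements
(`⊤` if there is no such `m`). -/
def sepTime {Z : Type*} (F : Z → Z) (P : ℕ → Set Z) (z z' : Z) : ℕ∞ :=
  ⨅ (m : ℕ) (_ : ¬ ∃ j, F^[m] z ∈ P j ∧ F^[m] z' ∈ P j), (m : ℕ∞)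

/-- The metric `d_θ(z,z') = θ^{s(z,z')}`. -/
def sepDist {Z : Type*} (F : Z → Z) (P : ℕ → Set Z) (θ : ℝ) (z z' : Z) : ℝ :=
  if sepTime F P z z' = ⊤ then 0 else θ ^ (sepTime F P z z').toNat

/-- An observable on the tower is piecewise constant if it is constant on each
set `Z_j × {ℓ}`, `0 ≤ ℓ < τ|_{Z_j}`. -/
def PiecewiseConst {Z : Type*} (P : ℕ → Set Z) (τ : Z → ℕ) {β : Type*}
    (V : TowerSet τ → β) : Prop :=
  ∀ x y : TowerSet τ, (∃ j, x.1.1 ∈ P j ∧ y.1.1 ∈ P j) → x.1.2 = y.1.2 → V x = V y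

/-- A piecewise constant observable on the tower is measurable. -/
lemma pc_measurable' {Z : Type*} [MeasurableSpace Z] {P : ℕ → Set Z}
    (hPmeas : ∀ j, MeasurableSet (P j)) (hPcover : (⋃ j, P j) = Set.univ)
    {τ : Z → ℕ} {β : Type*} [MeasurableSpace β]
    {V : TowerSet τ → β} (hV : PiecewiseConst P τ V) : Measurable V := by
  intro S _
  have hset : V ⁻¹' S = ⋃ (q : ℕ × ℕ)
      (_ : ∃ y : TowerSet τ, y.1.1 ∈ P q.1 ∧ y.1.2 = q.2 ∧ V y ∈ S),
      ((Subtype.val) ⁻¹' (P q.1 ×ˢ ({q.2} : Set ℕ)) : Set (TowerSet τ)) := by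
    ext x
    simp only [Set.mem_iUnion, Set.mem_preimage, Set.mem_prod, Set.mem_singleton_iff]
    constructor
    · intro hx
      have hx1 : x.1.1 ∈ ⋃ j, P j := hPcover ▸ Set.mem_univ _
      obtain ⟨j, hj⟩ := Set.mem_iUnion.mp hx1
      exact ⟨(j, x.1.2), ⟨x, hj, rfl, hx⟩, hj, rfl⟩
    · rintro ⟨⟨j, l⟩, ⟨y, hy1, hy2, hyS⟩, hx1, hx2⟩
      have hVxy : V x = V y := hV x y ⟨j, hx1, hy1⟩ (hx2.trans hy2.symm)
      show V x ∈ S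
      rw [hVxy]; exact hyS
  rw [hset]
  exact MeasurableSet.iUnion fun q => MeasurableSet.iUnion fun _ =>
    measurable_subtype_coe ((hPmeas q.1).prod (measurableSet_singleton q.2))

/-- The tower measure is finite when the return time has exponential tails. -/
lemma towerMeasure_univ_ne_top {Z : Type*} [MeasurableSpace Z] (μZ : Measure Z)
    [IsProbabilityMeasure μZ]
    (τ : Z → ℕ) (hτmeas : Measurable τ) (hτpos : ∀ z, 0 < τ z)
    (hτtail : ∃ c C₀ : ℝ, 0 < c ∧ 0 < C₀ ∧ ∀ n : ℕ,
      (μZ {z | n < τ z}).toReal ≤ C₀ * Real.exp (-c * n)) :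
    towerMeasure μZ τ Set.univ ≠ ⊤ := by
  obtain ⟨c, C₀, hc, hC₀, htail⟩ := hτtail
  have hTmeas : MeasurableSet (TowerSet τ) :=
    measurableSet_lt measurable_snd (hτmeas.comp measurable_fst)
  have hemb : MeasurableEmbedding (Subtype.val : TowerSet τ → Z × ℕ) :=
    MeasurableEmbedding.subtype_coe hTmeas
  -- pointwise tsum representation
  have hpt : ∀ z : Z, (τ z : ℝ≥0∞) = ∑' n : ℕ,
      Set.indicator {w | n < τ w} (fun _ => (1:ℝ≥0∞)) z := by
    intro z
    have h0 : ∀ n ∉ Finset.range (τ z),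
        Set.indicator {w | n < τ w} (fun _ => (1:ℝ≥0∞)) z = 0 := by
      intro n hn
      exact Set.indicator_of_notMem (s := {w | n < τ w}) (a := z)
        (fun h => hn (Finset.mem_range.mpr h)) _
    rw [tsum_eq_sum h0]
    have h1 : ∀ n ∈ Finset.range (τ z),
        Set.indicator {w | n < τ w} (fun _ => (1:ℝ≥0∞)) z = 1 :=
      fun n hn => Set.indicator_of_mem (s := {w | n < τ w}) (a := z)
        (Finset.mem_range.mp hn) _
    rw [Finset.sum_congr rfl h1, Finset.sum_const, Finset.card_range, nsmul_eq_mul, mul_one]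
  have hsum : ∫⁻ z, (τ z : ℝ≥0∞) ∂μZ = ∑' n : ℕ, μZ {w | n < τ w} := by
    rw [lintegral_congr hpt, lintegral_tsum (fun n =>
      (measurable_const.indicator (measurableSet_lt measurable_const hτmeas)).aemeasurable)]
    refine tsum_congr fun n => ?_
    rw [lintegral_indicator_const (measurableSet_lt measurable_const hτmeas), one_mul]
  have hfin : (∑' n : ℕ, μZ {w | n < τ w}) ≠ ⊤ := by
    have hle : ∀ n : ℕ, μZ {w | n < τ w} ≤ ENNReal.ofReal (C₀ * Real.exp (-c * n)) := by
      intro n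
      rw [← ENNReal.ofReal_toReal (measure_ne_top μZ _)]
      exact ENNReal.ofReal_le_ofReal (htail n)
    refine ne_top_of_le_ne_top ?_ (ENNReal.tsum_le_tsum hle)
    have heq : ∀ n : ℕ, ENNReal.ofReal (C₀ * Real.exp (-c * n)) =
        ENNReal.ofReal C₀ * ENNReal.ofReal (Real.exp (-c)) ^ n := by
      intro n
      rw [ENNReal.ofReal_mul hC₀.le]
      congr 1
      rw [show (-c * (n:ℝ)) = (n:ℝ) * -c by ring, Real.exp_nat_mul,
        ENNReal.ofReal_pow (Real.exp_nonneg _)]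
    rw [tsum_congr heq, ENNReal.tsum_mul_left, ENNReal.tsum_geometric]
    have hr1 : ENNReal.ofReal (Real.exp (-c)) < 1 := by
      rw [show (1:ℝ≥0∞) = ENNReal.ofReal 1 by simp]
      exact ENNReal.ofReal_lt_ofReal_iff_of_nonneg (Real.exp_nonneg _) |>.mpr
        (Real.exp_lt_one_iff.mpr (by linarith))
    exact ENNReal.mul_ne_top ENNReal.ofReal_ne_top
      (ENNReal.inv_ne_top.mpr (tsub_pos_of_lt hr1).ne')
  have hlint : ∫⁻ z, (τ z : ℝ≥0∞) ∂μZ ≠ ⊤ := hsum ▸ hfin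
  have hτmR : Measurable (fun z => (τ z : ℝ)) :=
    (measurable_from_top : Measurable (Nat.cast : ℕ → ℝ)).comp hτmeas
  have hτint : Integrable (fun z => (τ z : ℝ)) μZ := by
    refine ⟨hτmR.aestronglyMeasurable, ?_⟩
    have heq : ∫⁻ z, (‖(τ z : ℝ)‖₊ : ℝ≥0∞) ∂μZ = ∫⁻ z, (τ z : ℝ≥0∞) ∂μZ :=
      lintegral_congr fun z => by simp
    show (∫⁻ z, (‖(τ z : ℝ)‖₊ : ℝ≥0∞) ∂μZ) < ⊤
    rw [heq]
    exact lt_top_iff_ne_top.mpr hlint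
  have hτbar : (1:ℝ) ≤ ∫ z, (τ z : ℝ) ∂μZ := by
    have h := integral_mono (integrable_const (1:ℝ)) hτint
      (fun z => by have h1 : 1 ≤ τ z := hτpos z; show (1:ℝ) ≤ (τ z : ℝ); exact_mod_cast h1)
    simpa using h
  haveI : SFinite (Measure.count : Measure ℕ) := by
    rw [Measure.count]; infer_instance
  have hcnt : (μZ.prod Measure.count) (TowerSet τ) = ∫⁻ z, (τ z : ℝ≥0∞) ∂μZ := by
    rw [Measure.prod_apply hTmeas]
    refine lintegral_congr fun z => ?_
    have hpre : Prod.mk z ⁻¹' TowerSet τ = ↑(Finset.Iio (τ z)) := by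
      ext l; simp [TowerSet]
    rw [hpre, Measure.count_apply_finset]
    simp
  show ((ENNReal.ofReal (∫ z, (τ z:ℝ) ∂μZ))⁻¹ •
      Measure.comap Subtype.val (μZ.prod Measure.count)) Set.univ ≠ ⊤
  rw [Measure.smul_apply, smul_eq_mul, hemb.comap_apply, Set.image_univ,
    Subtype.range_coe, hcnt]
  exact ENNReal.mul_ne_top
    (ENNReal.inv_ne_top.mpr (ENNReal.ofReal_pos.mpr (by linarith)).ne') hlint

/-- Proposition 6.3: under Condition (6.1), with `σ_J² = ∑_i α_i² σ_i²`,
`∫_{R₀ ≤ p} (J R₀)² dμ_Δ = 2σ_J² log p + O(1)`. -/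
theorem truncated_second_moment_JR0
    -- the base probability space and its countable measurable partition
    {Z : Type*} [MeasurableSpace Z] (μZ : Measure Z) [IsProbabilityMeasure μZ]
    (P : ℕ → Set Z) (hPmeas : ∀ j, MeasurableSet (P j))
    (hPdisj : Pairwise (Function.onFun Disjoint P))
    (hPcover : (⋃ j, P j) = Set.univ)
    -- the base map: ergodic, measure-preserving, full-branch Gibbs--Markov
    (F : Z → Z) (hFmp : MeasurePreserving F μZ μZ) (hFerg : Ergodic F μZ)
    (hFfull : ∀ j, Set.BijOn F (P j) Set.univ)
    -- separation: `s(z,z') = ∞` iff `z = z'`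
    (hsep : ∀ z z', sepTime F P z z' = ⊤ → z = z')
    -- Gibbs--Markov distortion: `log ξ` is Lipschitz w.r.t. `d_θ`,
    -- where `ξ = dμ_Z/(dμ_Z ∘ F)`
    (θ : ℝ) (hθ : θ ∈ Set.Ioo (0:ℝ) 1) (ξ : Z → ℝ) (hξpos : ∀ z, 0 < ξ z)
    (hξjac : ∀ j, ∀ A : Set Z, MeasurableSet A → A ⊆ P j →
      μZ (F '' A) = ∫⁻ z in A, ENNReal.ofReal (ξ z)⁻¹ ∂μZ)
    (hξLip : ∃ CL : ℝ, ∀ z z',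
      |Real.log (ξ z) - Real.log (ξ z')| ≤ CL * sepDist F P θ z z')
    -- the return time: positive, constant on partition elements, exponential tails
    (τ : Z → ℕ) (hτmeas : Measurable τ) (hτpos : ∀ z, 0 < τ z)
    (hτconst : ∀ j, ∀ z ∈ P j, ∀ z' ∈ P j, τ z = τ z')
    (hτtail : ∃ c C₀ : ℝ, 0 < c ∧ 0 < C₀ ∧ ∀ n : ℕ,
      (μZ {z | n < τ z}).toReal ≤ C₀ * Real.exp (-c * n))
    -- the distinguished observable `R₀`: integrable, positive, piecewise constant
    (R₀ : TowerSet τ → ℕ) (hR₀pos : ∀ x, 0 < R₀ x)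
    (hR₀pc : PiecewiseConst P τ R₀)
    (hR₀int : Integrable (fun x => (R₀ x : ℝ)) (towerMeasure μZ τ))
    -- the observable `J`: bounded, piecewise constant, with (distinct) values `α i`
    (J : TowerSet τ → ℝ) (hJbd : ∃ B : ℝ, ∀ x, |J x| ≤ B)
    (hJpc : PiecewiseConst P τ J)
    (I : Type*) [Countable I] (α : I → ℝ) (hαinj : Function.Injective α)
    (hJvals : ∀ x, ∃ i, J x = α i) (hαatt : ∀ i, ∃ x, J x = α i)
    -- Condition (6.1)
    (σ : I → ℝ) (hσnn : ∀ i, 0 ≤ σ i)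
    (hσsum : Summable (fun i => σ i ^ 2)) (hσpos : 0 < ∑' i, σ i ^ 2)
    (C ε : ℝ) (hC : 0 < C) (hε : ε ∈ Set.Ioo (0:ℝ) 1)
    (h61 : ∀ n : ℕ, 1 ≤ n →
      Summable (fun i =>
        |(towerMeasure μZ τ {x | R₀ x = n ∧ J x = α i}).toReal -
          2 * σ i ^ 2 / (n : ℝ) ^ 3|) ∧
      ∑' i, |(towerMeasure μZ τ {x | R₀ x = n ∧ J x = α i}).toReal -
          2 * σ i ^ 2 / (n : ℝ) ^ 3| ≤ C / (n : ℝ) ^ ((3:ℝ) + ε))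
    -- Condition (6.2)
    (h62 : ∀ k l n : ℕ, 1 ≤ k → 1 ≤ l → 1 ≤ n →
      (towerMeasure μZ τ
          {x | R₀ x = k ∧ R₀ ((towerMap F τ hτpos)^[n] x) = l}).toReal ≤
        C / ((k : ℝ) ^ ((2:ℝ) + ε) * (l : ℝ) ^ ((2:ℝ) + ε)))
    :
    ∃ C' : ℝ, 0 < C' ∧ ∀ p : ℕ, 1 ≤ p →
      |(∫ x in {x | R₀ x ≤ p}, (J x * (R₀ x : ℝ)) ^ 2 ∂(towerMeasure μZ τ)) -
          2 * (∑' i, α i ^ 2 * σ i ^ 2) * Real.log p| ≤ C' := by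
  classical
  set μΔ := towerMeasure μZ τ with hμΔdef
  haveI : IsFiniteMeasure μΔ :=
    ⟨lt_top_iff_ne_top.mpr (towerMeasure_univ_ne_top μZ τ hτmeas hτpos hτtail)⟩
  -- measurability of the observables
  have hmR : Measurable R₀ := pc_measurable' hPmeas hPcover hR₀pc
  have hmJ : Measurable J := pc_measurable' hPmeas hPcover hJpc
  have hmRR : Measurable (fun x => (R₀ x : ℝ)) :=
    (measurable_from_top : Measurable (Nat.cast : ℕ → ℝ)).comp hmR
  have hmf : Measurable (fun x => (J x * (R₀ x : ℝ)) ^ 2) := (hmJ.mul hmRR).pow_const 2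
  -- the partition sets
  set A : ℕ → I → Set (TowerSet τ) := fun n i => {x | R₀ x = n ∧ J x = α i} with hA
  have hAmeas : ∀ n i, MeasurableSet (A n i) := by
    intro n i
    have : A n i = R₀ ⁻¹' {n} ∩ J ⁻¹' {α i} := by
      ext x; simp [hA, Set.mem_preimage]
    rw [this]
    exact (hmR (measurableSet_singleton n)).inter (hmJ (measurableSet_singleton (α i)))
  have hAdisj : ∀ n, Pairwise (Function.onFun Disjoint (A n)) := by
    intro n i i' hii
    refine Set.disjoint_left.mpr ?_
    rintro x ⟨_, hxi⟩ ⟨_, hxi'⟩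
    exact hii (hαinj (hxi.symm.trans hxi'))
  have hUn : ∀ n : ℕ, {x : TowerSet τ | R₀ x = n} = ⋃ i, A n i := by
    intro n; ext x
    simp only [hA, Set.mem_setOf_eq, Set.mem_iUnion]
    constructor
    · intro h; obtain ⟨i, hi⟩ := hJvals x; exact ⟨i, h, hi⟩
    · rintro ⟨i, h, _⟩; exact h
  -- bound on the values of J
  obtain ⟨B, hB⟩ := hJbd
  haveI hI : Nonempty I := by
    by_contra h
    rw [not_nonempty_iff] at h
    rw [tsum_empty] at hσpos
    exact lt_irrefl 0 hσpos
  have hB0 : 0 ≤ B := by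
    obtain ⟨x, _⟩ := hαatt (Classical.arbitrary I)
    exact le_trans (abs_nonneg _) (hB x)
  have hαB : ∀ i, |α i| ≤ B := fun i => by
    obtain ⟨x, hx⟩ := hαatt i; exact hx ▸ hB x
  have hα2 : ∀ i, α i ^ 2 ≤ B ^ 2 := fun i => by
    nlinarith [hαB i, abs_nonneg (α i), sq_abs (α i)]
  -- the limit variance
  set σJ : ℝ := ∑' i, α i ^ 2 * σ i ^ 2 with hσJ
  have hσJ0 : 0 ≤ σJ := tsum_nonneg (fun i => by positivity)
  have hσJsum : Summable (fun i => α i ^ 2 * σ i ^ 2) :=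
    Summable.of_nonneg_of_le (fun i => by positivity)
      (fun i => mul_le_mul_of_nonneg_right (hα2 i) (sq_nonneg _))
      (hσsum.mul_left (B ^ 2))
  -- summability of the measures
  have hm_summ : ∀ n, Summable (fun i => (μΔ (A n i)).toReal) := by
    intro n
    apply ENNReal.summable_toReal
    have h1 : ∑' i, μΔ (A n i) = μΔ (⋃ i, A n i) :=
      (measure_iUnion (hAdisj n) (fun i => hAmeas n i)).symm
    rw [h1]
    exact (measure_lt_top μΔ _).ne
  have hEsum : ∀ n, Summable (fun i => α i ^ 2 * (μΔ (A n i)).toReal) := fun n =>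
    Summable.of_nonneg_of_le (fun i => by positivity)
      (fun i => mul_le_mul_of_nonneg_right (hα2 i) ENNReal.toReal_nonneg)
      ((hm_summ n).mul_left (B ^ 2))
  set E : ℕ → ℝ := fun n => ∑' i, α i ^ 2 * (μΔ (A n i)).toReal with hE
  -- the key estimate from Condition (6.1)
  have hEkey : ∀ n : ℕ, 1 ≤ n →
      |E n - 2 * σJ / (n:ℝ) ^ 3| ≤ B ^ 2 * C / (n:ℝ) ^ ((3:ℝ) + ε) := by
    intro n hn
    obtain ⟨hs61, hb61⟩ := h61 n hn
    have hAco : ∀ i, {x | R₀ x = n ∧ J x = α i} = A n i := fun i => rfl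
    have hdsum : Summable (fun i => α i ^ 2 * (2 * σ i ^ 2 / (n:ℝ) ^ 3)) := by
      have h1 := hσJsum.mul_right (2 / (n:ℝ) ^ 3)
      refine h1.congr fun i => ?_
      ring
    have hDval : ∑' i, α i ^ 2 * (2 * σ i ^ 2 / (n:ℝ) ^ 3) = 2 * σJ / (n:ℝ) ^ 3 := by
      rw [show (fun i => α i ^ 2 * (2 * σ i ^ 2 / (n:ℝ) ^ 3)) =
          fun i => (α i ^ 2 * σ i ^ 2) * (2 / (n:ℝ) ^ 3) from funext fun i => by ring,
        tsum_mul_right, ← hσJ]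
      ring
    have hsub : E n - 2 * σJ / (n:ℝ) ^ 3 =
        ∑' i, α i ^ 2 * ((μΔ (A n i)).toReal - 2 * σ i ^ 2 / (n:ℝ) ^ 3) := by
      rw [hE, ← hDval, ← Summable.tsum_sub (hEsum n) hdsum]
      exact tsum_congr fun i => by ring
    have hterm : ∀ i, |α i ^ 2 * ((μΔ (A n i)).toReal - 2 * σ i ^ 2 / (n:ℝ) ^ 3)| ≤
        B ^ 2 * |(μΔ (A n i)).toReal - 2 * σ i ^ 2 / (n:ℝ) ^ 3| := by
      intro i
      rw [abs_mul, abs_of_nonneg (sq_nonneg (α i))]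
      exact mul_le_mul_of_nonneg_right (hα2 i) (abs_nonneg _)
    have habs : Summable
        (fun i => |α i ^ 2 * ((μΔ (A n i)).toReal - 2 * σ i ^ 2 / (n:ℝ) ^ 3)|) :=
      Summable.of_nonneg_of_le (fun i => abs_nonneg _) hterm (hs61.mul_left (B ^ 2))
    rw [hsub]
    calc |∑' i, α i ^ 2 * ((μΔ (A n i)).toReal - 2 * σ i ^ 2 / (n:ℝ) ^ 3)|
        ≤ ∑' i, |α i ^ 2 * ((μΔ (A n i)).toReal - 2 * σ i ^ 2 / (n:ℝ) ^ 3)| := by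
          have := norm_tsum_le_tsum_norm
            (f := fun i => α i ^ 2 * ((μΔ (A n i)).toReal - 2 * σ i ^ 2 / (n:ℝ) ^ 3))
            (by simp only [Real.norm_eq_abs]; exact habs)
          simp only [Real.norm_eq_abs] at this
          exact this
      _ ≤ ∑' i, B ^ 2 * |(μΔ (A n i)).toReal - 2 * σ i ^ 2 / (n:ℝ) ^ 3| :=
          Summable.tsum_le_tsum hterm habs (hs61.mul_left (B ^ 2))
      _ = B ^ 2 * ∑' i, |(μΔ (A n i)).toReal - 2 * σ i ^ 2 / (n:ℝ) ^ 3| := tsum_mul_left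
      _ ≤ B ^ 2 * (C / (n:ℝ) ^ ((3:ℝ) + ε)) :=
          mul_le_mul_of_nonneg_left hb61 (sq_nonneg B)
      _ = B ^ 2 * C / (n:ℝ) ^ ((3:ℝ) + ε) := by ring
  -- the tail constant
  have hKsum : Summable (fun n : ℕ => 1 / (n:ℝ) ^ ((1:ℝ) + ε)) :=
    Real.summable_one_div_nat_rpow.mpr (by linarith [hε.1])
  set K : ℝ := ∑' n : ℕ, 1 / (n:ℝ) ^ ((1:ℝ) + ε) with hK
  have hK0 : 0 ≤ K := tsum_nonneg fun n => by positivity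
  have hBCK : 0 ≤ B ^ 2 * C * K :=
    mul_nonneg (mul_nonneg (sq_nonneg B) hC.le) hK0
  refine ⟨B ^ 2 * C * K + 2 * σJ + 1, by linarith, ?_⟩
  intro p hp
  -- decomposition of the domain
  have hSet : {x : TowerSet τ | R₀ x ≤ p} = ⋃ n ∈ Finset.Icc 1 p, {x | R₀ x = n} := by
    ext x
    simp only [Set.mem_setOf_eq, Set.mem_iUnion, Finset.mem_Icc]
    constructor
    · intro h; exact ⟨R₀ x, ⟨hR₀pos x, h⟩, rfl⟩
    · rintro ⟨n, ⟨_, h2⟩, hx⟩; exact le_of_eq_of_le hx h2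
  have hSmeas : MeasurableSet {x : TowerSet τ | R₀ x ≤ p} := hmR measurableSet_Iic
  -- integrability
  have hIntOn : IntegrableOn (fun x => (J x * (R₀ x : ℝ)) ^ 2)
      {x : TowerSet τ | R₀ x ≤ p} μΔ := by
    refine Measure.integrableOn_of_bounded (M := (B * (p:ℝ)) ^ 2)
      (measure_ne_top μΔ _) hmf.aestronglyMeasurable ?_
    filter_upwards [ae_restrict_mem hSmeas] with x hx
    have h1 : |J x * (R₀ x : ℝ)| ≤ B * p := by
      rw [abs_mul, abs_of_nonneg (show (0:ℝ) ≤ (R₀ x : ℝ) by positivity)]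
      exact mul_le_mul (hB x) (by exact_mod_cast hx) (by positivity) hB0
    calc ‖(J x * (R₀ x : ℝ)) ^ 2‖ = |J x * (R₀ x : ℝ)| ^ 2 := by
          rw [Real.norm_eq_abs, abs_pow]
      _ ≤ (B * p) ^ 2 := pow_le_pow_left₀ (abs_nonneg _) h1 2
  -- first step: finite decomposition over the value of R₀
  have hstep1 : ∫ x in {x : TowerSet τ | R₀ x ≤ p}, (J x * (R₀ x : ℝ)) ^ 2 ∂μΔ
      = ∑ n ∈ Finset.Icc 1 p, ∫ x in {x : TowerSet τ | R₀ x = n},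
        (J x * (R₀ x : ℝ)) ^ 2 ∂μΔ := by
    rw [hSet]
    refine integral_biUnion_finset _ (fun n _ => hmR (measurableSet_singleton n)) ?_ ?_
    · intro n _ m _ hnm
      refine Set.disjoint_left.mpr ?_
      intro x hxn hxm
      exact hnm ((hxn : R₀ x = n).symm.trans (hxm : R₀ x = m))
    · intro n hn
      refine hIntOn.mono_set ?_
      intro x hx
      exact le_of_eq_of_le (hx : R₀ x = n) (Finset.mem_Icc.mp hn).2
  -- second step: countable decomposition over the value of J
  have hstep2 : ∀ n ∈ Finset.Icc 1 p,
      ∫ x in {x : TowerSet τ | R₀ x = n}, (J x * (R₀ x : ℝ)) ^ 2 ∂μΔ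
        = (n:ℝ) ^ 2 * E n := by
    intro n hn
    have hsub : {x : TowerSet τ | R₀ x = n} ⊆ {x : TowerSet τ | R₀ x ≤ p} := by
      intro x hx
      exact le_of_eq_of_le (hx : R₀ x = n) (Finset.mem_Icc.mp hn).2
    have hInt' : IntegrableOn (fun x => (J x * (R₀ x : ℝ)) ^ 2)
        {x : TowerSet τ | R₀ x = n} μΔ := hIntOn.mono_set hsub
    rw [hUn n, integral_iUnion (fun i => hAmeas n i) (hAdisj n) ((hUn n) ▸ hInt')]
    have hterm : ∀ i, ∫ x in A n i, (J x * (R₀ x : ℝ)) ^ 2 ∂μΔ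
        = (μΔ (A n i)).toReal * (α i * (n:ℝ)) ^ 2 := by
      intro i
      rw [setIntegral_congr_fun (hAmeas n i)
        (g := fun _ => (α i * (n:ℝ)) ^ 2) ?_, setIntegral_const, smul_eq_mul]
      · rfl
      intro x hx
      obtain ⟨h1, h2⟩ := (hx : R₀ x = n ∧ J x = α i)
      simp only [h2, h1]
    rw [tsum_congr hterm,
      show (fun i => (μΔ (A n i)).toReal * (α i * (n:ℝ)) ^ 2) =
        fun i => (n:ℝ) ^ 2 * (α i ^ 2 * (μΔ (A n i)).toReal) from funext fun i => by ring,
      tsum_mul_left]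
  have hInt_eq : ∫ x in {x : TowerSet τ | R₀ x ≤ p}, (J x * (R₀ x : ℝ)) ^ 2 ∂μΔ
      = ∑ n ∈ Finset.Icc 1 p, (n:ℝ) ^ 2 * E n := by
    rw [hstep1]; exact Finset.sum_congr rfl hstep2
  -- harmonic sums
  have hHeq : ∑ n ∈ Finset.Icc 1 p, ((n:ℝ))⁻¹ = (harmonic p : ℝ) := by
    rw [harmonic_eq_sum_Icc]
    push_cast
    rfl
  have hppos : (0:ℝ) < p := by exact_mod_cast hp
  have hHlog : |(harmonic p : ℝ) - Real.log p| ≤ 1 := by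
    have h1 : Real.log p ≤ (harmonic p : ℝ) := by
      calc Real.log p ≤ Real.log ((p:ℝ) + 1) := Real.log_le_log hppos (by linarith)
        _ ≤ (harmonic p : ℝ) := by
            have := log_add_one_le_harmonic p
            push_cast at this ⊢
            linarith
    have h2 : (harmonic p : ℝ) ≤ 1 + Real.log p := harmonic_le_one_add_log p
    rw [abs_le]
    constructor <;> linarith
  have hmid : ∑ n ∈ Finset.Icc 1 p, (n:ℝ) ^ 2 * (2 * σJ / (n:ℝ) ^ 3)
      = 2 * σJ * (harmonic p : ℝ) := by
    rw [← hHeq, Finset.mul_sum]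
    refine Finset.sum_congr rfl fun n hn => ?_
    have hn1 : 1 ≤ n := (Finset.mem_Icc.mp hn).1
    have hnpos : (0:ℝ) < (n:ℝ) := by exact_mod_cast hn1
    field_simp
  -- error bound
  have hsum_err : |∑ n ∈ Finset.Icc 1 p, (n:ℝ) ^ 2 * E n -
      ∑ n ∈ Finset.Icc 1 p, (n:ℝ) ^ 2 * (2 * σJ / (n:ℝ) ^ 3)| ≤ B ^ 2 * C * K := by
    rw [← Finset.sum_sub_distrib]
    calc |∑ n ∈ Finset.Icc 1 p,
          ((n:ℝ) ^ 2 * E n - (n:ℝ) ^ 2 * (2 * σJ / (n:ℝ) ^ 3))|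
        ≤ ∑ n ∈ Finset.Icc 1 p,
          |(n:ℝ) ^ 2 * E n - (n:ℝ) ^ 2 * (2 * σJ / (n:ℝ) ^ 3)| :=
          Finset.abs_sum_le_sum_abs _ _
      _ ≤ ∑ n ∈ Finset.Icc 1 p, B ^ 2 * C * (1 / (n:ℝ) ^ ((1:ℝ) + ε)) := by
          refine Finset.sum_le_sum fun n hn => ?_
          have hn1 : 1 ≤ n := (Finset.mem_Icc.mp hn).1
          have hnpos : (0:ℝ) < (n:ℝ) := by exact_mod_cast hn1
          have h1 : |(n:ℝ) ^ 2 * E n - (n:ℝ) ^ 2 * (2 * σJ / (n:ℝ) ^ 3)|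
              = (n:ℝ) ^ 2 * |E n - 2 * σJ / (n:ℝ) ^ 3| := by
            rw [← mul_sub, abs_mul, abs_of_nonneg (by positivity : (0:ℝ) ≤ (n:ℝ) ^ 2)]
          rw [h1]
          have h2 := hEkey n hn1
          have h3 : (n:ℝ) ^ 2 * (B ^ 2 * C / (n:ℝ) ^ ((3:ℝ) + ε))
              = B ^ 2 * C * (1 / (n:ℝ) ^ ((1:ℝ) + ε)) := by
            have hsplit : (n:ℝ) ^ ((3:ℝ) + ε) = (n:ℝ) ^ 2 * (n:ℝ) ^ ((1:ℝ) + ε) := by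
              rw [show ((3:ℝ) + ε) = ((2:ℕ):ℝ) + (1 + ε) by push_cast; ring,
                Real.rpow_add hnpos, Real.rpow_natCast]
            rw [hsplit]
            have h4 : (n:ℝ) ^ ((1:ℝ) + ε) ≠ 0 := (Real.rpow_pos_of_pos hnpos _).ne'
            field_simp
          calc (n:ℝ) ^ 2 * |E n - 2 * σJ / (n:ℝ) ^ 3|
              ≤ (n:ℝ) ^ 2 * (B ^ 2 * C / (n:ℝ) ^ ((3:ℝ) + ε)) :=
                mul_le_mul_of_nonneg_left h2 (by positivity)
            _ = B ^ 2 * C * (1 / (n:ℝ) ^ ((1:ℝ) + ε)) := h3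
      _ = B ^ 2 * C * ∑ n ∈ Finset.Icc 1 p, (1 / (n:ℝ) ^ ((1:ℝ) + ε)) := by
          rw [Finset.mul_sum]
      _ ≤ B ^ 2 * C * K := by
          refine mul_le_mul_of_nonneg_left ?_ (mul_nonneg (sq_nonneg B) hC.le)
          exact Summable.sum_le_tsum (Finset.Icc 1 p) (fun n _ => by positivity) hKsum
  -- assembly
  rw [hInt_eq]
  have t1 : |∑ n ∈ Finset.Icc 1 p, (n:ℝ) ^ 2 * E n - 2 * σJ * (harmonic p : ℝ)|
      ≤ B ^ 2 * C * K := hmid ▸ hsum_err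
  have t2 : |2 * σJ * (harmonic p : ℝ) - 2 * σJ * Real.log p| ≤ 2 * σJ := by
    rw [← mul_sub, abs_mul, abs_of_nonneg (by linarith : (0:ℝ) ≤ 2 * σJ)]
    nlinarith [hHlog, abs_nonneg ((harmonic p : ℝ) - Real.log p), hσJ0]
  calc |∑ n ∈ Finset.Icc 1 p, (n:ℝ) ^ 2 * E n - 2 * σJ * Real.log p|
      ≤ |∑ n ∈ Finset.Icc 1 p, (n:ℝ) ^ 2 * E n - 2 * σJ * (harmonic p : ℝ)|
        + |2 * σJ * (harmonic p : ℝ) - 2 * σJ * Real.log p| := abs_sub_le _ _ _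
    _ ≤ B ^ 2 * C * K + 2 * σJ := add_le_add t1 t2
    _ ≤ B ^ 2 * C * K + 2 * σJ + 1 := by linarith
end
end

section
/- Let T > 0 and α* > 0. Let α : [−T,0] → ℝ be continuous with α(t) ≥ α* for all t ∈ [−T,0], and let u : [−T,0] → ℝ be differentiable with u(t) ≥ 0 and u'(t) = −u(t)² + α(t) for all t ∈ [−T,0]. If u(0) ≤ (1/2)·√α*, then u(t) ≤ (1/2)·√α* and u'(t) ≥ (3/4)·α* for all t ∈ [−T,0]; in particular, u is non-decreasing on [−T,0] and u(0) ≥ u(−T) + (3/4)·T·α*. -/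
open Set Real

/-- Riccati comparison argument in the proof of Lemma 4.1: if `u ≥ 0` solves
`u' = -u² + α` on `[-T,0]` with `α ≥ α* > 0`, and `u(0) ≤ (1/2)√α*`, then
`u(t) ≤ (1/2)√α*` and `u'(t) = -u(t)² + α(t) ≥ (3/4)α*` on `[-T,0]`; in particular
`u` is non-decreasing on `[-T,0]` and `u(0) ≥ u(-T) + (3/4)·T·α*`. -/
theorem riccati_lower_bound
    (T αs : ℝ) (hT : 0 < T) (hαs : 0 < αs) (α u : ℝ → ℝ)
    (hαc : ContinuousOn α (Set.Icc (-T) 0))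
    (hαge : ∀ t ∈ Set.Icc (-T) 0, αs ≤ α t)
    (hunn : ∀ t ∈ Set.Icc (-T) 0, 0 ≤ u t)
    (hu : ∀ t ∈ Set.Icc (-T) 0,
      HasDerivWithinAt u (-(u t) ^ 2 + α t) (Set.Icc (-T) 0) t)
    (h0 : u 0 ≤ 1 / 2 * Real.sqrt αs) :
    (∀ t ∈ Set.Icc (-T) 0,
        u t ≤ 1 / 2 * Real.sqrt αs ∧ 3 / 4 * αs ≤ -(u t) ^ 2 + α t) ∧
      MonotoneOn u (Set.Icc (-T) 0) ∧
      u (-T) + 3 / 4 * T * αs ≤ u 0 := by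
  set c : ℝ := 1 / 2 * Real.sqrt αs with hc
  have hc2 : c ^ 2 = 1 / 4 * αs := by
    have := Real.sq_sqrt hαs.le
    rw [hc]; ring_nf; nlinarith [Real.sq_sqrt hαs.le]
  have hucont : ContinuousOn u (Set.Icc (-T) 0) :=
    fun t ht => (hu t ht).continuousWithinAt
  have hmem0 : (0 : ℝ) ∈ Set.Icc (-T) 0 := by constructor <;> linarith
  -- Main claim: u ≤ c on [-T,0]
  have key : ∀ t ∈ Set.Icc (-T) 0, u t ≤ c := by
    intro t₀ ht₀
    by_contra hgt
    push_neg at hgt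
    set A : Set ℝ := {t ∈ Set.Icc t₀ 0 | u t ≤ c} with hA
    have hsub : Set.Icc t₀ 0 ⊆ Set.Icc (-T) 0 := Set.Icc_subset_Icc ht₀.1 le_rfl
    have hAne : A.Nonempty := ⟨0, ⟨ht₀.2, le_rfl⟩, h0⟩
    have hAbdd : BddBelow A := ⟨t₀, fun x hx => hx.1.1⟩
    have hAclosed : IsClosed A := by
      have : A = Set.Icc t₀ 0 ∩ u ⁻¹' Set.Iic c := by
        ext x; simp [hA, Set.mem_sep_iff, and_comm]
      rw [this]
      exact (hucont.mono hsub).preimage_isClosed_of_isClosed isClosed_Icc isClosed_Iic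
    set s : ℝ := sInf A with hs
    have hsA : s ∈ A := hAclosed.csInf_mem hAne hAbdd
    have hsIcc : s ∈ Set.Icc (-T) 0 := hsub hsA.1
    have ht₀s : t₀ < s := by
      rcases lt_or_eq_of_le hsA.1.1 with h | h
      · exact h
      · exact absurd hsA.2 (by rw [← h]; linarith)
    have hlt : ∀ x, t₀ ≤ x → x < s → c < u x := by
      intro x hx1 hx2
      by_contra hle
      push_neg at hle
      have : x ∈ A := ⟨⟨hx1, by linarith [hsIcc.2]⟩, hle⟩
      exact absurd (csInf_le hAbdd this) (by linarith)
    -- derivative at s within Icc (-T) s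
    have hds : HasDerivWithinAt u (-(u s) ^ 2 + α s) (Set.Icc (-T) s) s :=
      (hu s hsIcc).mono (Set.Icc_subset_Icc le_rfl hsIcc.2)
    have hus : 0 ≤ u s := hunn s hsIcc
    have hdpos : 0 < -(u s) ^ 2 + α s := by
      have h1 : αs ≤ α s := hαge s hsIcc
      have h2 : u s ^ 2 ≤ c ^ 2 := by nlinarith [hsA.2]
      nlinarith
    have hslope := hasDerivWithinAt_iff_tendsto_slope.1 hds
    have hdiff : Set.Icc (-T) s \ {s} = Set.Ico (-T) s := Set.Icc_sdiff_right
    rw [hdiff] at hslope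
    have hTs : -T < s := lt_of_le_of_lt ht₀.1 ht₀s
    have hnb : (nhdsWithin s (Set.Ico (-T) s)).NeBot := right_nhdsWithin_Ico_neBot hTs
    have hev1 : ∀ᶠ x in nhdsWithin s (Set.Ico (-T) s), 0 < slope u s x :=
      hslope.eventually (eventually_gt_nhds hdpos)
    have hev2 : ∀ᶠ x in nhdsWithin s (Set.Ico (-T) s), t₀ < x :=
      eventually_nhdsWithin_of_eventually_nhds (eventually_gt_nhds ht₀s)
    have hev3 : ∀ᶠ x in nhdsWithin s (Set.Ico (-T) s), x ∈ Set.Ico (-T) s :=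
      eventually_mem_nhdsWithin
    obtain ⟨x, hx1, hx2, hx3⟩ := (hev1.and (hev2.and hev3)).exists
    have hxs : x < s := hx3.2
    have hslopex : slope u s x = (u x - u s) / (x - s) := by
      rw [slope_def_field]
    have hux : u x < u s := by
      rw [hslopex] at hx1
      by_contra h
      push_neg at h
      have : (u x - u s) / (x - s) ≤ 0 :=
        div_nonpos_of_nonneg_of_nonpos (by linarith) (by linarith)
      linarith
    have := hlt x hx2.le hxs
    linarith [hsA.2]
  -- second part of the pointwise claim
  have key2 : ∀ t ∈ Set.Icc (-T) 0, 3 / 4 * αs ≤ -(u t) ^ 2 + α t := by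
    intro t ht
    have h1 := hαge t ht
    have h2 := hunn t ht
    have h3 := key t ht
    have : u t ^ 2 ≤ c ^ 2 := by nlinarith
    nlinarith
  -- derivative facts on the interior
  have hderiv : ∀ t ∈ Set.Ioo (-T) (0:ℝ), HasDerivAt u (-(u t) ^ 2 + α t) t := by
    intro t ht
    have : Set.Icc (-T) (0:ℝ) ∈ nhds t := Icc_mem_nhds ht.1 ht.2
    exact (hu t ⟨ht.1.le, ht.2.le⟩).hasDerivAt this
  have hintr : interior (Set.Icc (-T) (0:ℝ)) = Set.Ioo (-T) 0 := interior_Icc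
  have hdiffOn : DifferentiableOn ℝ u (interior (Set.Icc (-T) (0:ℝ))) := by
    rw [hintr]
    exact fun t ht => ((hderiv t ht).differentiableAt).differentiableWithinAt
  have hdnn : ∀ t ∈ interior (Set.Icc (-T) (0:ℝ)), 3 / 4 * αs ≤ deriv u t := by
    rw [hintr]
    intro t ht
    rw [(hderiv t ht).deriv]
    exact key2 t ⟨ht.1.le, ht.2.le⟩
  have hmono : MonotoneOn u (Set.Icc (-T) 0) := by
    apply monotoneOn_of_deriv_nonneg (convex_Icc _ _) hucont hdiffOn
    intro t ht
    have := hdnn t ht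
    nlinarith
  have hmvt : 3 / 4 * αs * (0 - (-T)) ≤ u 0 - u (-T) :=
    (convex_Icc (-T) (0:ℝ)).mul_sub_le_image_sub_of_le_deriv hucont hdiffOn hdnn
      (-T) (by constructor <;> linarith) 0 hmem0 (by linarith)
  refine ⟨fun t ht => ⟨key t ht, key2 t ht⟩, hmono, by nlinarith⟩
end

section
/- For every C₀ > 0 there exists C₁ > 0 such that the following holds for every ε ∈ (0,1]. Set A = ε^{-1}. Let K₀, K₁ : [−A,0] → (−∞,0] be continuous, and let u₀, u₁ : [−A,0] → [0,∞) be differentiable with u_i'(t) = −u_i(t)² − K_i(t) for all t ∈ [−A,0] (i = 0,1). If |K₀(t) − K₁(t)| ≤ C₀·((u₀(t) + u₁(t))·ε + ε²) for all t ∈ [−A,0], then |u₀(0) − u₁(0)| ≤ C₁·ε. -/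
open Set Real MeasureTheory intervalIntegral Topology Filter


/-- Analytic core of Theorem 4.4 (uniform `C^{1+Lip}` regularity of the foliations):
for nonnegative Riccati solutions `uᵢ' = -uᵢ² - Kᵢ` on `[-A,0]` with `A = ε⁻¹`,
`Kᵢ ≤ 0`, and `|K₀ - K₁| ≤ C₀((u₀+u₁)ε + ε²)`, one has `|u₀(0) - u₁(0)| ≤ C₁ ε`. -/
theorem riccati_lipschitz_comparison
    (C₀ : ℝ) (hC₀ : 0 < C₀) :
    ∃ C₁ : ℝ, 0 < C₁ ∧ ∀ ε : ℝ, ε ∈ Set.Ioc (0:ℝ) 1 → ∀ A : ℝ, A = ε⁻¹ →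
      ∀ K₀ K₁ u₀ u₁ : ℝ → ℝ,
        ContinuousOn K₀ (Set.Icc (-A) 0) → ContinuousOn K₁ (Set.Icc (-A) 0) →
        (∀ t ∈ Set.Icc (-A) 0, K₀ t ≤ 0) → (∀ t ∈ Set.Icc (-A) 0, K₁ t ≤ 0) →
        (∀ t ∈ Set.Icc (-A) 0, 0 ≤ u₀ t) → (∀ t ∈ Set.Icc (-A) 0, 0 ≤ u₁ t) →
        (∀ t ∈ Set.Icc (-A) 0,
          HasDerivWithinAt u₀ (-(u₀ t) ^ 2 - K₀ t) (Set.Icc (-A) 0) t) →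
        (∀ t ∈ Set.Icc (-A) 0,
          HasDerivWithinAt u₁ (-(u₁ t) ^ 2 - K₁ t) (Set.Icc (-A) 0) t) →
        (∀ t ∈ Set.Icc (-A) 0,
          |K₀ t - K₁ t| ≤ C₀ * ((u₀ t + u₁ t) * ε + ε ^ 2)) →
        |u₀ 0 - u₁ 0| ≤ C₁ * ε := by
  refine ⟨1 + 2 * C₀, by positivity, ?_⟩
  rintro ε ⟨hε0, hε1⟩ A hA K₀ K₁ u₀ u₁ hK₀c hK₁c hK₀ hK₁ hu₀ hu₁ hd₀ hd₁ hKK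
  have hA0 : 0 < A := by rw [hA]; positivity
  have hAε : A * ε = 1 := by rw [hA]; field_simp
  have hA1 : 1 ≤ A := by nlinarith
  have hAneg : -A < 0 := by linarith
  have h0I : (0:ℝ) ∈ Icc (-A) 0 := ⟨by linarith, le_refl 0⟩
  have hu₀c : ContinuousOn u₀ (Icc (-A) 0) := fun t ht => (hd₀ t ht).continuousWithinAt
  have hu₁c : ContinuousOn u₁ (Icc (-A) 0) := fun t ht => (hd₁ t ht).continuousWithinAt
  set s : ℝ → ℝ := fun t => u₀ t + u₁ t with hsdef
  have hsc : ContinuousOn s (Icc (-A) 0) := hu₀c.add hu₁c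
  have hs0 : ∀ t ∈ Icc (-A) 0, 0 ≤ s t := fun t ht => add_nonneg (hu₀ t ht) (hu₁ t ht)
  have hsint : ∀ a b, a ∈ Icc (-A) 0 → b ∈ Icc (-A) 0 → IntervalIntegrable s volume a b := by
    intro a b ha hb
    exact (hsc.mono (uIcc_subset_Icc ha hb)).intervalIntegrable
  set E : ℝ → ℝ := fun t => Real.exp (∫ τ in (0:ℝ)..t, s τ) with hEdef
  have hEpos : ∀ t, 0 < E t := fun t => Real.exp_pos _
  have hE0 : E 0 = 1 := by simp [hEdef]
  have hPc : ContinuousOn (fun t => ∫ τ in (0:ℝ)..t, s τ) (Icc (-A) 0) := by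
    have := continuousOn_primitive_interval' (μ := volume) (f := s) (b₁ := -A) (b₂ := 0)
      (hsint (-A) 0 (⟨le_refl _, by linarith⟩) h0I) (by rw [uIcc_of_le hAneg.le]; exact h0I)
    rwa [uIcc_of_le hAneg.le] at this
  have hEc : ContinuousOn E (Icc (-A) 0) := Real.continuous_exp.comp_continuousOn hPc
  have hEd : ∀ t ∈ Ioo (-A) 0, HasDerivAt E (Real.exp (∫ τ in (0:ℝ)..t, s τ) * s t) t := by
    intro t ht
    have hmem : Icc (-A) 0 ∈ 𝓝 t := Icc_mem_nhds ht.1 ht.2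
    have hPd : HasDerivAt (fun u => ∫ τ in (0:ℝ)..u, s τ) (s t) t :=
      integral_hasDerivAt_right (hsint 0 t h0I (Ioo_subset_Icc_self ht))
        ⟨Icc (-A) 0, hmem, hsc.aestronglyMeasurable measurableSet_Icc⟩
        (hsc.continuousAt hmem)
    exact hPd.exp
  have hEle1 : ∀ t ∈ Icc (-A) 0, E t ≤ 1 := by
    intro t ht
    have h1 : 0 ≤ ∫ τ in t..0, s τ :=
      intervalIntegral.integral_nonneg ht.2 (fun τ hτ => hs0 τ ⟨le_trans ht.1 hτ.1, hτ.2⟩)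
    have h2 : (∫ τ in (0:ℝ)..t, s τ) ≤ 0 := by
      rw [intervalIntegral.integral_symm]; linarith
    calc E t ≤ Real.exp 0 := Real.exp_le_exp.mpr h2
    _ = 1 := Real.exp_zero
  -- Mean value theorem to find good starting point c
  obtain ⟨c, hc, hceq⟩ := exists_hasDerivAt_eq_slope E
    (fun t => Real.exp (∫ τ in (0:ℝ)..t, s τ) * s t) hAneg hEc hEd
  have hcI : c ∈ Icc (-A) 0 := Ioo_subset_Icc_self hc
  have hslope : E c * s c ≤ ε := by
    have h1 : Real.exp (∫ τ in (0:ℝ)..c, s τ) * s c = (1 - E (-A)) / A := by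
      rw [hceq, hE0]; ring_nf
    have h2 : (1 - E (-A)) / A ≤ ε := by
      rw [div_le_iff₀ hA0]
      have := hEpos (-A)
      nlinarith
    calc E c * s c = (1 - E (-A)) / A := h1
    _ ≤ ε := h2
  -- FTC for E on [c,0]
  have hsubIcc : Icc c 0 ⊆ Icc (-A) 0 := Icc_subset_Icc hcI.1 (le_refl 0)
  have hsubIoo : Ioo c 0 ⊆ Ioo (-A) 0 := Ioo_subset_Ioo hcI.1 (le_refl 0)
  have hEsint : IntervalIntegrable (fun t => Real.exp (∫ τ in (0:ℝ)..t, s τ) * s t) volume c 0 := by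
    apply ContinuousOn.intervalIntegrable
    apply (hEc.mul hsc).mono
    rw [uIcc_of_le hc.2.le]; exact hsubIcc
  have hFTCE : ∫ t in c..0, Real.exp (∫ τ in (0:ℝ)..t, s τ) * s t = E 0 - E c :=
    intervalIntegral.integral_eq_sub_of_hasDeriv_right_of_le hc.2.le (hEc.mono hsubIcc)
      (fun x hx => ((hEd x (hsubIoo hx)).hasDerivWithinAt)) hEsint
  -- FTC for G = w * E on [c,0]
  set G : ℝ → ℝ := fun t => (u₀ t - u₁ t) * E t with hGdef
  have hGc : ContinuousOn G (Icc (-A) 0) := (hu₀c.sub hu₁c).mul hEc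
  have hGd : ∀ t ∈ Ioo (-A) 0, HasDerivAt G ((K₁ t - K₀ t) * E t) t := by
    intro t ht
    have htI := Ioo_subset_Icc_self ht
    have hmem : Icc (-A) 0 ∈ 𝓝 t := Icc_mem_nhds ht.1 ht.2
    have hw : HasDerivAt (fun τ => u₀ τ - u₁ τ)
        ((-(u₀ t) ^ 2 - K₀ t) - (-(u₁ t) ^ 2 - K₁ t)) t :=
      ((hd₀ t htI).hasDerivAt hmem).sub ((hd₁ t htI).hasDerivAt hmem)
    have := hw.mul (hEd t ht)
    convert this using 1
    · rfl
    · rfl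
    · rfl
    simp only [hEdef, hsdef]
    ring
  have hGint : IntervalIntegrable (fun t => (K₁ t - K₀ t) * E t) volume c 0 := by
    apply ContinuousOn.intervalIntegrable
    apply ((hK₁c.sub hK₀c).mul hEc).mono
    rw [uIcc_of_le hc.2.le]; exact hsubIcc
  have hFTCG : ∫ t in c..0, (K₁ t - K₀ t) * E t = G 0 - G c :=
    intervalIntegral.integral_eq_sub_of_hasDeriv_right_of_le hc.2.le (hGc.mono hsubIcc)
      (fun x hx => ((hGd x (hsubIoo hx)).hasDerivWithinAt)) hGint
  -- bound the integral
  have hbound : ∀ t ∈ Icc c 0, |(K₁ t - K₀ t) * E t|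
      ≤ C₀ * ε * (Real.exp (∫ τ in (0:ℝ)..t, s τ) * s t) + C₀ * ε ^ 2 * E t := by
    intro t ht
    have htI := hsubIcc ht
    have h1 : |(K₁ t - K₀ t)| ≤ C₀ * (s t * ε + ε ^ 2) := by
      rw [abs_sub_comm]; exact hKK t htI
    have h2 : |(K₁ t - K₀ t) * E t| = |(K₁ t - K₀ t)| * E t := by
      rw [abs_mul, abs_of_pos (hEpos t)]
    rw [h2]
    have hE := (hEpos t).le
    calc |(K₁ t - K₀ t)| * E t ≤ (C₀ * (s t * ε + ε ^ 2)) * E t :=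
          mul_le_mul_of_nonneg_right h1 hE
    _ = C₀ * ε * (Real.exp (∫ τ in (0:ℝ)..t, s τ) * s t) + C₀ * ε ^ 2 * E t := by
          simp only [hEdef]; ring
  have habsint : IntervalIntegrable (fun t => |(K₁ t - K₀ t) * E t|) volume c 0 := hGint.abs
  have hrhsint : IntervalIntegrable
      (fun t => C₀ * ε * (Real.exp (∫ τ in (0:ℝ)..t, s τ) * s t) + C₀ * ε ^ 2 * E t) volume c 0 :=
    (hEsint.const_mul _).add ((hEc.mono (by rw [uIcc_of_le hc.2.le]; exact hsubIcc)).intervalIntegrable.const_mul _)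
  have hEint : IntervalIntegrable E volume c 0 :=
    (hEc.mono (by rw [uIcc_of_le hc.2.le]; exact hsubIcc)).intervalIntegrable
  have hIE : ∫ t in c..0, E t ≤ A := by
    calc ∫ t in c..0, E t ≤ ∫ t in c..0, (1:ℝ) := by
          apply intervalIntegral.integral_mono_on hc.2.le hEint intervalIntegrable_const
          intro t ht; exact hEle1 t (hsubIcc ht)
    _ = 0 - c := by simp
    _ ≤ A := by have := hcI.1; linarith
  have hIabs : |∫ t in c..0, (K₁ t - K₀ t) * E t| ≤ C₀ * ε + C₀ * ε ^ 2 * A := by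
    calc |∫ t in c..0, (K₁ t - K₀ t) * E t| ≤ ∫ t in c..0, |(K₁ t - K₀ t) * E t| :=
          intervalIntegral.abs_integral_le_integral_abs hc.2.le
    _ ≤ ∫ t in c..0, (C₀ * ε * (Real.exp (∫ τ in (0:ℝ)..t, s τ) * s t) + C₀ * ε ^ 2 * E t) :=
          intervalIntegral.integral_mono_on hc.2.le habsint hrhsint hbound
    _ = C₀ * ε * (∫ t in c..0, Real.exp (∫ τ in (0:ℝ)..t, s τ) * s t)
          + C₀ * ε ^ 2 * ∫ t in c..0, E t := by
          rw [intervalIntegral.integral_add (hEsint.const_mul _) (hEint.const_mul _),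
            intervalIntegral.integral_const_mul, intervalIntegral.integral_const_mul]
    _ ≤ C₀ * ε * 1 + C₀ * ε ^ 2 * A := by
          have h1 : (∫ t in c..0, Real.exp (∫ τ in (0:ℝ)..t, s τ) * s t) ≤ 1 := by
            rw [hFTCE, hE0]; have := hEpos c; linarith
          have h2 : 0 ≤ C₀ * ε := by positivity
          have h3 : 0 ≤ C₀ * ε ^ 2 := by positivity
          have h4 := mul_le_mul_of_nonneg_left h1 h2
          have h5 := mul_le_mul_of_nonneg_left hIE h3
          linarith
    _ = C₀ * ε + C₀ * ε ^ 2 * A := by ring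
  -- |G c| ≤ ε
  have hGcbound : |G c| ≤ ε := by
    have h1 : |u₀ c - u₁ c| ≤ s c := by
      have := abs_sub (u₀ c) (u₁ c)
      rw [abs_of_nonneg (hu₀ c hcI), abs_of_nonneg (hu₁ c hcI)] at this
      exact this
    calc |G c| = |u₀ c - u₁ c| * E c := by
          rw [hGdef]; rw [abs_mul, abs_of_pos (hEpos c)]
    _ ≤ s c * E c := mul_le_mul_of_nonneg_right h1 (hEpos c).le
    _ = E c * s c := mul_comm _ _
    _ ≤ ε := hslope
  -- combine
  have hG0 : G 0 = u₀ 0 - u₁ 0 := by rw [hGdef]; simp [hE0]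
  have key : |u₀ 0 - u₁ 0| ≤ ε + (C₀ * ε + C₀ * ε ^ 2 * A) := by
    have : u₀ 0 - u₁ 0 = G c + ∫ t in c..0, (K₁ t - K₀ t) * E t := by
      rw [hFTCG, hG0]; ring
    rw [this]
    calc |G c + ∫ t in c..0, (K₁ t - K₀ t) * E t|
        ≤ |G c| + |∫ t in c..0, (K₁ t - K₀ t) * E t| := abs_add_le _ _
    _ ≤ ε + (C₀ * ε + C₀ * ε ^ 2 * A) := add_le_add hGcbound hIabs
  have hε2A : ε ^ 2 * A = ε := by
    rw [pow_two]; rw [mul_comm ε ε, mul_assoc]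
    rw [mul_comm ε A, hAε, mul_one]
  calc |u₀ 0 - u₁ 0| ≤ ε + (C₀ * ε + C₀ * ε ^ 2 * A) := key
  _ = (1 + 2 * C₀) * ε := by rw [mul_assoc C₀ (ε^2) A, hε2A]; ring
end

section
/- Let r ∈ (4,5) and set p = (r−1)/(2(r−3)), so p > 1. For every C₀ > 0 there exists C₁ > 0 such that the following holds for every ε ∈ (0,1]. Set A = ε^{-(r−1)/4}. Let K₀, K₁ : [−A,0] → (−∞,0] be continuous, and let u₀, u₁ : [−A,0] → [0,∞) be differentiable with u_i'(t) = −u_i(t)² − K_i(t) for all t ∈ [−A,0] (i = 0,1). If |K₀(t) − K₁(t)| ≤ C₀·((u₀(t)^{1/p} + u₁(t)^{1/p})·ε + ε²) for all t ∈ [−A,0], then |u₀(0) − u₁(0)| ≤ C₁·ε^{(r−1)/4}. -/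
open Set Real intervalIntegral

lemma rpow_le_add_one' {x q : ℝ} (hx : 0 ≤ x) (hq0 : 0 ≤ q) (hq1 : q ≤ 1) : x ^ q ≤ x + 1 := by
  rcases le_total x 1 with h | h
  · calc x ^ q ≤ 1 := Real.rpow_le_one hx h hq0
      _ ≤ x + 1 := by linarith
  · calc x ^ q ≤ x ^ (1:ℝ) := Real.rpow_le_rpow_of_exponent_le h hq1
      _ = x := Real.rpow_one x
      _ ≤ x + 1 := by linarith


lemma integral_rpow_exp_bound (A q : ℝ) (hA0 : 0 < A) (hq0 : 0 ≤ q) (hq1 : q ≤ 1)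
    (u W : ℝ → ℝ) (hcu : ContinuousOn u (Icc (-A) 0)) (hWc : Continuous W)
    (hun : ∀ t ∈ Icc (-A) 0, 0 ≤ u t)
    (hWm : ∀ t ∈ Icc (-A) 0, W t ≤ W 0)
    (hint : (∫ t in (-A)..(0:ℝ), u t * Real.exp (W t - W 0)) ≤ 1) :
    (∫ t in (-A)..(0:ℝ), u t ^ q * Real.exp (W t - W 0)) ≤ 2 * A ^ (1 - q) := by
  have hleA : -A ≤ (0:ℝ) := by linarith
  have hAq : (0:ℝ) ≤ A ^ (-q) := Real.rpow_nonneg hA0.le _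
  have hce : ContinuousOn (fun t => Real.exp (W t - W 0)) (Icc (-A) 0) :=
    (hWc.continuousOn.sub continuousOn_const).rexp
  have hpt : ∀ t ∈ Icc (-A) 0,
      u t ^ q * Real.exp (W t - W 0)
        ≤ A ^ (-q) * (A * (u t * Real.exp (W t - W 0)) + 1) := by
    intro t ht
    have hut := hun t ht
    have epos := Real.exp_pos (W t - W 0)
    have ele : Real.exp (W t - W 0) ≤ 1 :=
      Real.exp_le_one_iff.2 (by have := hWm t ht; linarith)
    have h1 : (A * u t) ^ q ≤ A * u t + 1 :=
      rpow_le_add_one' (by positivity) hq0 hq1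
    have h2 : (A * u t) ^ q = A ^ q * u t ^ q := Real.mul_rpow hA0.le hut
    have h3 : A ^ (-q) * A ^ q = 1 := by
      rw [← Real.rpow_add hA0]; simp
    have h4 : u t ^ q ≤ A ^ (-q) * (A * u t + 1) := by
      have := mul_le_mul_of_nonneg_left (h2 ▸ h1) hAq
      calc u t ^ q = A ^ (-q) * A ^ q * u t ^ q := by rw [h3, one_mul]
        _ = A ^ (-q) * (A ^ q * u t ^ q) := by ring
        _ ≤ A ^ (-q) * (A * u t + 1) := this
    calc u t ^ q * Real.exp (W t - W 0)
        ≤ (A ^ (-q) * (A * u t + 1)) * Real.exp (W t - W 0) :=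
          mul_le_mul_of_nonneg_right h4 epos.le
      _ = A ^ (-q) * (A * (u t * Real.exp (W t - W 0)) + Real.exp (W t - W 0)) := by ring
      _ ≤ A ^ (-q) * (A * (u t * Real.exp (W t - W 0)) + 1) := by
          apply mul_le_mul_of_nonneg_left _ hAq
          have : (0:ℝ) ≤ A * (u t * Real.exp (W t - W 0)) := by positivity
          linarith
  have hiue : IntervalIntegrable (fun t => u t * Real.exp (W t - W 0))
      MeasureTheory.volume (-A) 0 := (hcu.mul hce).intervalIntegrable_of_Icc hleA
  have hirpow : IntervalIntegrable (fun t => u t ^ q * Real.exp (W t - W 0))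
      MeasureTheory.volume (-A) 0 :=
    ((hcu.rpow_const (fun t _ => Or.inr hq0)).mul hce).intervalIntegrable_of_Icc hleA
  have hiRHS : IntervalIntegrable
      (fun t => A ^ (-q) * (A * (u t * Real.exp (W t - W 0)) + 1))
      MeasureTheory.volume (-A) 0 :=
    (continuousOn_const.mul ((continuousOn_const.mul (hcu.mul hce)).add
      continuousOn_const)).intervalIntegrable_of_Icc hleA
  have hIle : (∫ t in (-A)..(0:ℝ), u t ^ q * Real.exp (W t - W 0))
      ≤ ∫ t in (-A)..(0:ℝ), A ^ (-q) * (A * (u t * Real.exp (W t - W 0)) + 1) :=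
    intervalIntegral.integral_mono_on hleA hirpow hiRHS hpt
  have hIval : (∫ t in (-A)..(0:ℝ), A ^ (-q) * (A * (u t * Real.exp (W t - W 0)) + 1))
      = A ^ (-q) * (A * (∫ t in (-A)..(0:ℝ), u t * Real.exp (W t - W 0)) + A) := by
    rw [intervalIntegral.integral_const_mul,
      intervalIntegral.integral_add ((IntervalIntegrable.const_mul hiue A)) intervalIntegrable_const,
      intervalIntegral.integral_const_mul, intervalIntegral.integral_const]
    simp only [sub_neg_eq_add, zero_add, smul_eq_mul, mul_one]
  have hA1q : A ^ (-q) * (2 * A) = 2 * A ^ (1 - q) := by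
    have : A ^ (1 - q) = A ^ (-q) * A ^ (1:ℝ) := by
      rw [← Real.rpow_add hA0]; ring_nf
    rw [this, Real.rpow_one]; ring
  calc (∫ t in (-A)..(0:ℝ), u t ^ q * Real.exp (W t - W 0))
      ≤ A ^ (-q) * (A * (∫ t in (-A)..(0:ℝ), u t * Real.exp (W t - W 0)) + A) :=
        hIle.trans_eq hIval
    _ ≤ A ^ (-q) * (2 * A) := by
        apply mul_le_mul_of_nonneg_left _ hAq
        have := mul_le_mul_of_nonneg_left hint hA0.le
        linarith
    _ = 2 * A ^ (1 - q) := hA1q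

lemma riccati_aux (a : ℝ) (ha : a < 0) (K u : ℝ → ℝ)
    (hKneg : ∀ t ∈ Icc a 0, K t ≤ 0)
    (hupos : ∀ t ∈ Icc a 0, 0 ≤ u t)
    (hu : ∀ t ∈ Icc a 0, HasDerivWithinAt u (-(u t) ^ 2 - K t) (Icc a 0) t) :
    ∃ W : ℝ → ℝ, Continuous W ∧ W a = 0 ∧
      (∀ t ∈ Icc a 0, HasDerivWithinAt W (u t) (Icc a 0) t) ∧
      (∀ t ∈ Icc a 0, W t ≤ W 0) ∧
      (-a) * (u a * Real.exp (-(W 0))) ≤ 1 ∧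
      (∫ t in a..(0:ℝ), u t * Real.exp (W t - W 0)) ≤ 1 := by
  have hle : a ≤ (0:ℝ) := ha.le
  have hcu : ContinuousOn u (Icc a 0) := fun t ht => (hu t ht).continuousWithinAt
  set v : ℝ → ℝ := IccExtend hle ((Icc a 0).restrict u) with hv
  have hvc : Continuous v := hcu.restrict.Icc_extend'
  have hveq : ∀ t ∈ Icc a 0, v t = u t := fun t ht => by
    rw [hv, IccExtend_of_mem hle _ ht]; rfl
  have hvnn : ∀ t, 0 ≤ v t := fun t => by
    rw [hv, IccExtend_apply]; exact hupos _ (projIcc a 0 hle t).2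
  set W : ℝ → ℝ := fun t => ∫ s in a..t, v s with hW
  have hWd : ∀ t, HasDerivAt W (v t) t := fun t =>
    (hvc.integral_hasStrictDerivAt a t).hasDerivAt
  have hWdiff : Differentiable ℝ W := fun t => (hWd t).differentiableAt
  have hWc : Continuous W := hWdiff.continuous
  have hWa : W a = 0 := integral_same
  have hdW : ∀ t ∈ Icc a 0, HasDerivWithinAt W (u t) (Icc a 0) t := fun t ht => by
    rw [← hveq t ht]; exact (hWd t).hasDerivWithinAt
  have hWmono : ∀ t ∈ Icc a 0, W t ≤ W 0 := by
    intro t ht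
    have h1 : W t + ∫ s in t..(0:ℝ), v s = W 0 :=
      integral_add_adjacent_intervals (hvc.intervalIntegrable a t) (hvc.intervalIntegrable t 0)
    have h2 : 0 ≤ ∫ s in t..(0:ℝ), v s :=
      integral_nonneg ht.2 (fun s _ => hvnn s)
    linarith
  have hW0 : 0 ≤ W 0 := by have := hWmono a (left_mem_Icc.2 hle); rw [hWa] at this; exact this
  -- monotonicity of u t * exp (W t)
  have hmono : MonotoneOn (fun t => u t * Real.exp (W t)) (Icc a 0) := by
    apply monotoneOn_of_deriv_nonneg (convex_Icc a 0)
      (hcu.mul (hWc.continuousOn.rexp))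
    · intro x hx
      rw [interior_Icc] at hx
      have hxI : x ∈ Icc a 0 := Ioo_subset_Icc_self hx
      have hux : HasDerivAt u (-(u x) ^ 2 - K x) x :=
        (hu x hxI).hasDerivAt (Icc_mem_nhds hx.1 hx.2)
      exact ((hux.mul ((hWd x).exp)).differentiableAt).differentiableWithinAt
    · intro x hx
      rw [interior_Icc] at hx
      have hxI : x ∈ Icc a 0 := Ioo_subset_Icc_self hx
      have hux : HasDerivAt u (-(u x) ^ 2 - K x) x :=
        (hu x hxI).hasDerivAt (Icc_mem_nhds hx.1 hx.2)
      have hd : HasDerivAt (fun t => u t * Real.exp (W t))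
          ((-(u x) ^ 2 - K x) * Real.exp (W x) + u x * (Real.exp (W x) * v x)) x :=
        hux.mul ((hWd x).exp)
      show 0 ≤ deriv (fun t => u t * Real.exp (W t)) x
      rw [hd.deriv, hveq x hxI]
      have hK := hKneg x hxI
      nlinarith [Real.exp_pos (W x), sq_nonneg (u x)]
  have key : ∀ t ∈ Icc a 0, u a ≤ u t * Real.exp (W t) := by
    intro t ht
    have := hmono (left_mem_Icc.2 hle) ht ht.1
    simpa [hWa] using this
  -- FTC for exp ∘ W
  have hftc : (∫ t in a..(0:ℝ), Real.exp (W t) * v t) = Real.exp (W 0) - 1 := by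
    have := integral_eq_sub_of_hasDerivAt
      (f := fun t => Real.exp (W t)) (f' := fun t => Real.exp (W t) * v t)
      (fun t _ => (hWd t).exp) (((hWc.rexp).mul hvc).intervalIntegrable a 0)
    simpa [hWa] using this
  have hconst : (∫ _t in a..(0:ℝ), u a) = (-a) * u a := by
    rw [intervalIntegral.integral_const, smul_eq_mul, zero_sub]
  have hmono_int : (-a) * u a ≤ Real.exp (W 0) - 1 := by
    rw [← hconst, ← hftc]
    have hcongr : (∫ t in a..(0:ℝ), Real.exp (W t) * v t)
        = ∫ t in a..(0:ℝ), u t * Real.exp (W t) := by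
      apply integral_congr
      intro t ht
      rw [uIcc_of_le hle] at ht
      show Real.exp (W t) * v t = u t * Real.exp (W t)
      rw [hveq t ht]; ring
    rw [hcongr]
    exact integral_mono_on hle (intervalIntegrable_const)
      ((hcu.mul (hWc.continuousOn.rexp)).intervalIntegrable_of_Icc hle) key
  have hbd : (-a) * (u a * Real.exp (-(W 0))) ≤ 1 := by
    have h1 := mul_le_mul_of_nonneg_right hmono_int (Real.exp_pos (-(W 0))).le
    have h2 : Real.exp (W 0) * Real.exp (-(W 0)) = 1 := by
      rw [← Real.exp_add]; simp
    have h3 : Real.exp (-(W 0)) ≤ 1 := Real.exp_le_one_iff.2 (by linarith)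
    nlinarith [Real.exp_pos (-(W 0))]
  have hftc2 : (∫ t in a..(0:ℝ), u t * Real.exp (W t - W 0)) ≤ 1 := by
    have heq : (∫ t in a..(0:ℝ), Real.exp (W t - W 0) * v t)
        = Real.exp (W 0 - W 0) - Real.exp (W a - W 0) := by
      exact integral_eq_sub_of_hasDerivAt
        (f := fun t => Real.exp (W t - W 0)) (f' := fun t => Real.exp (W t - W 0) * v t)
        (fun t _ => ((hWd t).sub_const (W 0)).exp)
        ((((hWc.sub continuous_const).rexp).mul hvc).intervalIntegrable a 0)
    have hcongr : (∫ t in a..(0:ℝ), u t * Real.exp (W t - W 0))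
        = ∫ t in a..(0:ℝ), Real.exp (W t - W 0) * v t := by
      apply integral_congr
      intro t ht
      rw [uIcc_of_le hle] at ht
      show u t * Real.exp (W t - W 0) = Real.exp (W t - W 0) * v t
      rw [hveq t ht]; ring
    rw [hcongr, heq, hWa]
    have : Real.exp (0 - W 0) > 0 := Real.exp_pos _
    simp only [sub_self, Real.exp_zero]
    linarith
  exact ⟨W, hWc, hWa, hdW, hWmono, hbd, hftc2⟩


set_option maxHeartbeats 1000000 in
/-- Content of the Remark following Theorem 4.4 (`C^{1+(r-1)/4}` regularity for
`r ∈ (4,5)`): for nonnegative Riccati solutions `uᵢ' = -uᵢ² - Kᵢ` on `[-A,0]` with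
`A = ε^{-(r-1)/4}`, `Kᵢ ≤ 0`, and `|K₀ - K₁| ≤ C₀((u₀^{1/p} + u₁^{1/p})ε + ε²)` where
`p = (r-1)/(2(r-3))`, one has `|u₀(0) - u₁(0)| ≤ C₁ ε^{(r-1)/4}`. -/
theorem riccati_holder_comparison
    (r : ℝ) (hr : r ∈ Set.Ioo (4:ℝ) 5) (p : ℝ) (hp : p = (r - 1) / (2 * (r - 3)))
    (C₀ : ℝ) (hC₀ : 0 < C₀) :
    ∃ C₁ : ℝ, 0 < C₁ ∧ ∀ ε : ℝ, ε ∈ Set.Ioc (0:ℝ) 1 →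
      ∀ A : ℝ, A = ε ^ (-((r - 1) / 4)) →
      ∀ K₀ K₁ u₀ u₁ : ℝ → ℝ,
        ContinuousOn K₀ (Set.Icc (-A) 0) → ContinuousOn K₁ (Set.Icc (-A) 0) →
        (∀ t ∈ Set.Icc (-A) 0, K₀ t ≤ 0) → (∀ t ∈ Set.Icc (-A) 0, K₁ t ≤ 0) →
        (∀ t ∈ Set.Icc (-A) 0, 0 ≤ u₀ t) → (∀ t ∈ Set.Icc (-A) 0, 0 ≤ u₁ t) →
        (∀ t ∈ Set.Icc (-A) 0,
          HasDerivWithinAt u₀ (-(u₀ t) ^ 2 - K₀ t) (Set.Icc (-A) 0) t) →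
        (∀ t ∈ Set.Icc (-A) 0,
          HasDerivWithinAt u₁ (-(u₁ t) ^ 2 - K₁ t) (Set.Icc (-A) 0) t) →
        (∀ t ∈ Set.Icc (-A) 0,
          |K₀ t - K₁ t| ≤ C₀ * ((u₀ t ^ (1 / p) + u₁ t ^ (1 / p)) * ε + ε ^ 2)) →
        |u₀ 0 - u₁ 0| ≤ C₁ * ε ^ ((r - 1) / 4) := by
  obtain ⟨hr4, hr5⟩ := hr
  refine ⟨5 * C₀ + 2, by linarith, ?_⟩
  rintro ε ⟨hε0, hε1⟩ A hA K₀ K₁ u₀ u₁ hK₀c hK₁c hK₀n hK₁n hu₀n hu₁n hd₀ hd₁ hKd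
  set α : ℝ := (r - 1) / 4 with hα
  have hεα : (0:ℝ) < ε ^ α := Real.rpow_pos_of_pos hε0 _
  have hA0 : 0 < A := by rw [hA]; exact Real.rpow_pos_of_pos hε0 _
  have haA : -A < 0 := by linarith
  have hleA : -A ≤ (0:ℝ) := haA.le
  -- p facts
  have hr1 : (0:ℝ) < r - 1 := by linarith
  have hr3 : (0:ℝ) < r - 3 := by linarith
  have hp1 : 1 / p = 2 * (r - 3) / (r - 1) := by
    rw [hp]; rw [one_div_div]
  have hip0 : 0 < 1 / p := by rw [hp1]; positivity
  have hip1 : 1 / p < 1 := by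
    rw [hp1, div_lt_one hr1]; linarith
  --1/A = ε ^ α
  have hAinv : A⁻¹ = ε ^ α := by
    rw [hA, ← Real.rpow_neg hε0.le, neg_neg]
  have hAεα : A * ε ^ α = 1 := by
    rw [← hAinv, mul_inv_cancel₀ hA0.ne']
  -- get the two W's
  obtain ⟨W₀, hW₀c, hW₀a, hdW₀, hW₀m, hbd₀, hint₀⟩ :=
    riccati_aux (-A) haA K₀ u₀ hK₀n hu₀n hd₀
  obtain ⟨W₁, hW₁c, hW₁a, hdW₁, hW₁m, hbd₁, hint₁⟩ :=
    riccati_aux (-A) haA K₁ u₁ hK₁n hu₁n hd₁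
  have hcu₀ : ContinuousOn u₀ (Icc (-A) 0) := fun t ht => (hd₀ t ht).continuousWithinAt
  have hcu₁ : ContinuousOn u₁ (Icc (-A) 0) := fun t ht => (hd₁ t ht).continuousWithinAt
  have hmemA : -A ∈ Icc (-A) (0:ℝ) := left_mem_Icc.2 hleA
  have hmem0 : (0:ℝ) ∈ Icc (-A) (0:ℝ) := right_mem_Icc.2 hleA
  have hW₀0 : 0 ≤ W₀ 0 := by have := hW₀m (-A) hmemA; rw [hW₀a] at this; exact this
  have hW₁0 : 0 ≤ W₁ 0 := by have := hW₁m (-A) hmemA; rw [hW₁a] at this; exact this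
  set c : ℝ := W₀ 0 + W₁ 0 with hc
  set g : ℝ → ℝ := fun t => (u₀ t - u₁ t) * Real.exp (W₀ t + W₁ t - c) with hg
  set G : ℝ → ℝ := fun t => (K₁ t - K₀ t) * Real.exp (W₀ t + W₁ t - c) with hG
  have hgd : ∀ t ∈ Icc (-A) 0, HasDerivWithinAt g (G t) (Icc (-A) 0) t := by
    intro t ht
    have d1 := (hd₀ t ht).sub (hd₁ t ht)
    have d2 := (((hdW₀ t ht).add (hdW₁ t ht)).sub_const c).exp
    have : HasDerivWithinAt (fun t => (u₀ t - u₁ t) * Real.exp (W₀ t + W₁ t - c)) _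
        (Icc (-A) 0) t := d1.mul d2
    convert this using 1
    simp only [hG, Pi.sub_apply, Pi.add_apply]
    ring
  have hGc : ContinuousOn G (Icc (-A) 0) :=
    (hK₁c.sub hK₀c).mul
      (((hW₀c.continuousOn.add hW₁c.continuousOn).sub continuousOn_const).rexp)
  have hGint : IntervalIntegrable G MeasureTheory.volume (-A) 0 :=
    hGc.intervalIntegrable_of_Icc hleA
  have hgc : ContinuousOn g (Icc (-A) 0) :=
    (hcu₀.sub hcu₁).mul
      (((hW₀c.continuousOn.add hW₁c.continuousOn).sub continuousOn_const).rexp)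
  have hFTC : (∫ t in (-A)..(0:ℝ), G t) = g 0 - g (-A) := by
    apply integral_eq_sub_of_hasDeriv_right_of_le hleA hgc
    · intro x hx
      exact ((hgd x (Ioo_subset_Icc_self hx)).hasDerivAt (Icc_mem_nhds hx.1 hx.2)).hasDerivWithinAt
    · exact hGint
  have hg0 : g 0 = u₀ 0 - u₁ 0 := by
    have h0 : W₀ 0 + W₁ 0 - c = 0 := by rw [hc]; ring
    rw [hg]; simp only [h0, Real.exp_zero, mul_one]
  have hrepr : u₀ 0 - u₁ 0 = g (-A) + ∫ t in (-A)..(0:ℝ), G t := by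
    rw [hFTC, hg0]; ring
  -- bound on |g (-A)|
  have hgA : |g (-A)| ≤ 2 * ε ^ α := by
    have hbd₀' : A * (u₀ (-A) * Real.exp (-(W₀ 0))) ≤ 1 := by
      have := hbd₀; rwa [neg_neg] at this
    have hbd₁' : A * (u₁ (-A) * Real.exp (-(W₁ 0))) ≤ 1 := by
      have := hbd₁; rwa [neg_neg] at this
    have he : Real.exp (W₀ (-A) + W₁ (-A) - c) = Real.exp (-(W₀ 0)) * Real.exp (-(W₁ 0)) := by
      rw [← Real.exp_add, hW₀a, hW₁a, hc]; ring_nf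
    have e₀pos := Real.exp_pos (-(W₀ 0))
    have e₁pos := Real.exp_pos (-(W₁ 0))
    have e₀le : Real.exp (-(W₀ 0)) ≤ 1 := Real.exp_le_one_iff.2 (by linarith)
    have e₁le : Real.exp (-(W₁ 0)) ≤ 1 := Real.exp_le_one_iff.2 (by linarith)
    have habs : |g (-A)| ≤ (u₀ (-A) + u₁ (-A)) * (Real.exp (-(W₀ 0)) * Real.exp (-(W₁ 0))) := by
      rw [hg]; simp only []
      rw [abs_mul, he, abs_of_pos (mul_pos e₀pos e₁pos)]
      have : |u₀ (-A) - u₁ (-A)| ≤ u₀ (-A) + u₁ (-A) := by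
        have h1 := hu₀n (-A) hmemA
        have h2 := hu₁n (-A) hmemA
        rw [abs_sub_le_iff]; constructor <;> linarith
      exact mul_le_mul_of_nonneg_right this (mul_pos e₀pos e₁pos).le
    have hu₀A := hu₀n (-A) hmemA
    have hu₁A := hu₁n (-A) hmemA
    have h₀ : u₀ (-A) * Real.exp (-(W₀ 0)) ≤ ε ^ α :=
      le_of_mul_le_mul_left (hbd₀'.trans_eq hAεα.symm) hA0
    have h₁ : u₁ (-A) * Real.exp (-(W₁ 0)) ≤ ε ^ α :=
      le_of_mul_le_mul_left (hbd₁'.trans_eq hAεα.symm) hA0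
    nlinarith [mul_nonneg (mul_nonneg hu₀A e₀pos.le) (sub_nonneg.2 e₁le),
      mul_nonneg (mul_nonneg hu₁A e₁pos.le) (sub_nonneg.2 e₀le)]
  -- bound on the integral of |G|
  -- continuity of the rpow integrands
  have hcr₀ : ContinuousOn (fun t => u₀ t ^ (1 / p)) (Icc (-A) 0) :=
    hcu₀.rpow_const (fun t _ => Or.inr hip0.le)
  have hcr₁ : ContinuousOn (fun t => u₁ t ^ (1 / p)) (Icc (-A) 0) :=
    hcu₁.rpow_const (fun t _ => Or.inr hip0.le)
  have hce₀ : ContinuousOn (fun t => Real.exp (W₀ t - W₀ 0)) (Icc (-A) 0) :=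
    (hW₀c.continuousOn.sub continuousOn_const).rexp
  have hce₁ : ContinuousOn (fun t => Real.exp (W₁ t - W₁ 0)) (Icc (-A) 0) :=
    (hW₁c.continuousOn.sub continuousOn_const).rexp
  -- the key per-solution integral estimates
  have key₀ : (∫ t in (-A)..(0:ℝ), u₀ t ^ (1 / p) * Real.exp (W₀ t - W₀ 0))
      ≤ 2 * A ^ (1 - 1 / p) :=
    integral_rpow_exp_bound A (1 / p) hA0 hip0.le hip1.le u₀ W₀ hcu₀ hW₀c hu₀n hW₀m hint₀
  have key₁ : (∫ t in (-A)..(0:ℝ), u₁ t ^ (1 / p) * Real.exp (W₁ t - W₁ 0))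
      ≤ 2 * A ^ (1 - 1 / p) :=
    integral_rpow_exp_bound A (1 / p) hA0 hip0.le hip1.le u₁ W₁ hcu₁ hW₁c hu₁n hW₁m hint₁
  -- pointwise bound on |G|
  set B : ℝ → ℝ := fun t => C₀ * ε * (u₀ t ^ (1 / p) * Real.exp (W₀ t - W₀ 0))
      + C₀ * ε * (u₁ t ^ (1 / p) * Real.exp (W₁ t - W₁ 0)) + C₀ * ε ^ 2 with hB
  have hBc : ContinuousOn B (Icc (-A) 0) :=
    (((continuousOn_const.mul (hcr₀.mul hce₀)).add
      (continuousOn_const.mul (hcr₁.mul hce₁))).add continuousOn_const)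
  have hptB : ∀ t ∈ Icc (-A) 0, |G t| ≤ B t := by
    intro t ht
    have hKt := hKd t ht
    have hexp : Real.exp (W₀ t + W₁ t - c)
        = Real.exp (W₀ t - W₀ 0) * Real.exp (W₁ t - W₁ 0) := by
      rw [← Real.exp_add, hc]; ring_nf
    have e₀pos := Real.exp_pos (W₀ t - W₀ 0)
    have e₁pos := Real.exp_pos (W₁ t - W₁ 0)
    have e₀le : Real.exp (W₀ t - W₀ 0) ≤ 1 :=
      Real.exp_le_one_iff.2 (by have := hW₀m t ht; linarith)
    have e₁le : Real.exp (W₁ t - W₁ 0) ≤ 1 :=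
      Real.exp_le_one_iff.2 (by have := hW₁m t ht; linarith)
    have hx₀ : (0:ℝ) ≤ u₀ t ^ (1 / p) := Real.rpow_nonneg (hu₀n t ht) _
    have hx₁ : (0:ℝ) ≤ u₁ t ^ (1 / p) := Real.rpow_nonneg (hu₁n t ht) _
    have hGt : |G t| = |K₀ t - K₁ t| * (Real.exp (W₀ t - W₀ 0) * Real.exp (W₁ t - W₁ 0)) := by
      rw [hG]; simp only []
      rw [abs_mul, abs_sub_comm, hexp, abs_of_pos (mul_pos e₀pos e₁pos)]
    rw [hGt, hB]
    have h1 : |K₀ t - K₁ t| * (Real.exp (W₀ t - W₀ 0) * Real.exp (W₁ t - W₁ 0))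
        ≤ (C₀ * ((u₀ t ^ (1 / p) + u₁ t ^ (1 / p)) * ε + ε ^ 2))
          * (Real.exp (W₀ t - W₀ 0) * Real.exp (W₁ t - W₁ 0)) :=
      mul_le_mul_of_nonneg_right hKt (mul_pos e₀pos e₁pos).le
    refine h1.trans ?_
    have hε2 : (0:ℝ) ≤ ε ^ 2 := sq_nonneg ε
    have t1 : u₀ t ^ (1 / p) * (Real.exp (W₀ t - W₀ 0) * Real.exp (W₁ t - W₁ 0))
        ≤ u₀ t ^ (1 / p) * Real.exp (W₀ t - W₀ 0) :=
      mul_le_mul_of_nonneg_left (mul_le_of_le_one_right e₀pos.le e₁le) hx₀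
    have t2 : u₁ t ^ (1 / p) * (Real.exp (W₀ t - W₀ 0) * Real.exp (W₁ t - W₁ 0))
        ≤ u₁ t ^ (1 / p) * Real.exp (W₁ t - W₁ 0) :=
      mul_le_mul_of_nonneg_left (mul_le_of_le_one_left e₁pos.le e₀le) hx₁
    have t3 : Real.exp (W₀ t - W₀ 0) * Real.exp (W₁ t - W₁ 0) ≤ 1 :=
      mul_le_one₀ e₀le e₁pos.le e₁le
    have hCε : (0:ℝ) ≤ C₀ * ε := by positivity
    have hCε2 : (0:ℝ) ≤ C₀ * ε ^ 2 := by positivity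
    calc C₀ * ((u₀ t ^ (1 / p) + u₁ t ^ (1 / p)) * ε + ε ^ 2)
          * (Real.exp (W₀ t - W₀ 0) * Real.exp (W₁ t - W₁ 0))
        = C₀ * ε * (u₀ t ^ (1 / p) * (Real.exp (W₀ t - W₀ 0) * Real.exp (W₁ t - W₁ 0)))
          + C₀ * ε * (u₁ t ^ (1 / p) * (Real.exp (W₀ t - W₀ 0) * Real.exp (W₁ t - W₁ 0)))
          + C₀ * ε ^ 2 * (Real.exp (W₀ t - W₀ 0) * Real.exp (W₁ t - W₁ 0)) := by ring
      _ ≤ C₀ * ε * (u₀ t ^ (1 / p) * Real.exp (W₀ t - W₀ 0))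
          + C₀ * ε * (u₁ t ^ (1 / p) * Real.exp (W₁ t - W₁ 0)) + C₀ * ε ^ 2 * 1 :=
        add_le_add (add_le_add (mul_le_mul_of_nonneg_left t1 hCε)
          (mul_le_mul_of_nonneg_left t2 hCε)) (mul_le_mul_of_nonneg_left t3 hCε2)
      _ = C₀ * ε * (u₀ t ^ (1 / p) * Real.exp (W₀ t - W₀ 0))
          + C₀ * ε * (u₁ t ^ (1 / p) * Real.exp (W₁ t - W₁ 0)) + C₀ * ε ^ 2 := by ring
  have hintG : |∫ t in (-A)..(0:ℝ), G t| ≤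
      C₀ * ε * (2 * A ^ (1 - 1 / p)) + C₀ * ε * (2 * A ^ (1 - 1 / p)) + C₀ * ε ^ 2 * A := by
    have habs := intervalIntegral.abs_integral_le_integral_abs (μ := MeasureTheory.volume)
      (f := G) hleA
    have hmono2 : (∫ t in (-A)..(0:ℝ), |G t|) ≤ ∫ t in (-A)..(0:ℝ), B t :=
      integral_mono_on hleA (hGc.abs.intervalIntegrable_of_Icc hleA)
        (hBc.intervalIntegrable_of_Icc hleA) hptB
    have hBval : (∫ t in (-A)..(0:ℝ), B t)
        = C₀ * ε * (∫ t in (-A)..(0:ℝ), u₀ t ^ (1 / p) * Real.exp (W₀ t - W₀ 0))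
          + C₀ * ε * (∫ t in (-A)..(0:ℝ), u₁ t ^ (1 / p) * Real.exp (W₁ t - W₁ 0))
          + C₀ * ε ^ 2 * A := by
      rw [hB]
      rw [intervalIntegral.integral_add ((((continuousOn_const.mul (hcr₀.mul hce₀)).add
            (continuousOn_const.mul (hcr₁.mul hce₁))).intervalIntegrable_of_Icc hleA :
            IntervalIntegrable (fun t => C₀ * ε * (u₀ t ^ (1 / p) * Real.exp (W₀ t - W₀ 0))
              + C₀ * ε * (u₁ t ^ (1 / p) * Real.exp (W₁ t - W₁ 0))) MeasureTheory.volume (-A) 0))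
          (intervalIntegrable_const),
        intervalIntegral.integral_add (((continuousOn_const.mul (hcr₀.mul hce₀)).intervalIntegrable_of_Icc hleA :
            IntervalIntegrable (fun t => C₀ * ε * (u₀ t ^ (1 / p) * Real.exp (W₀ t - W₀ 0)))
              MeasureTheory.volume (-A) 0))
          (((continuousOn_const.mul (hcr₁.mul hce₁)).intervalIntegrable_of_Icc hleA :
            IntervalIntegrable (fun t => C₀ * ε * (u₁ t ^ (1 / p) * Real.exp (W₁ t - W₁ 0)))
              MeasureTheory.volume (-A) 0)),
        intervalIntegral.integral_const_mul, intervalIntegral.integral_const_mul,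
        intervalIntegral.integral_const]
      simp only [sub_neg_eq_add, zero_add, smul_eq_mul]
      ring
    have hmul₀ : C₀ * ε * (∫ t in (-A)..(0:ℝ), u₀ t ^ (1 / p) * Real.exp (W₀ t - W₀ 0))
        ≤ C₀ * ε * (2 * A ^ (1 - 1 / p)) :=
      mul_le_mul_of_nonneg_left key₀ (by positivity)
    have hmul₁ : C₀ * ε * (∫ t in (-A)..(0:ℝ), u₁ t ^ (1 / p) * Real.exp (W₁ t - W₁ 0))
        ≤ C₀ * ε * (2 * A ^ (1 - 1 / p)) :=
      mul_le_mul_of_nonneg_left key₁ (by positivity)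
    calc |∫ t in (-A)..(0:ℝ), G t| ≤ ∫ t in (-A)..(0:ℝ), |G t| := habs
      _ ≤ ∫ t in (-A)..(0:ℝ), B t := hmono2
      _ = _ := hBval
      _ ≤ _ := by linarith
  -- exponent arithmetic
  have hεA : ε * A ^ (1 - 1 / p) = ε ^ α := by
    have hexp : (1:ℝ) + -α * (1 - 1 / p) = α := by
      rw [hα, hp1]
      field_simp
      ring
    rw [hA, ← Real.rpow_mul hε0.le]
    nth_rewrite 1 [← Real.rpow_one ε]
    rw [← Real.rpow_add hε0, hexp]
  have hε2A : ε ^ 2 * A ≤ ε ^ α := by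
    have h2 : (ε:ℝ) ^ (2:ℕ) = ε ^ ((2:ℕ):ℝ) := (Real.rpow_natCast ε 2).symm
    rw [h2, hA, ← Real.rpow_add hε0]
    apply Real.rpow_le_rpow_of_exponent_ge hε0 hε1
    rw [hα]
    push_cast
    linarith
  -- final assembly
  have hfinal : |u₀ 0 - u₁ 0| ≤ 2 * ε ^ α + (4 * C₀ * (ε * A ^ (1 - 1 / p)) + C₀ * (ε ^ 2 * A)) := by
    rw [hrepr]
    calc |g (-A) + ∫ t in (-A)..(0:ℝ), G t| ≤ |g (-A)| + |∫ t in (-A)..(0:ℝ), G t| := abs_add_le _ _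
      _ ≤ 2 * ε ^ α + (C₀ * ε * (2 * A ^ (1 - 1 / p)) + C₀ * ε * (2 * A ^ (1 - 1 / p))
          + C₀ * ε ^ 2 * A) := add_le_add hgA hintG
      _ = 2 * ε ^ α + (4 * C₀ * (ε * A ^ (1 - 1 / p)) + C₀ * (ε ^ 2 * A)) := by ring
  rw [hεA] at hfinal
  have : |u₀ 0 - u₁ 0| ≤ (5 * C₀ + 2) * ε ^ α := by
    nlinarith [mul_le_mul_of_nonneg_left hε2A hC₀.le]
  calc |u₀ 0 - u₁ 0| ≤ (5 * C₀ + 2) * ε ^ α := this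
    _ = (5 * C₀ + 2) * ε ^ ((r - 1) / 4) := by rw [hα]
end

section
/- For every C₀ > 0 and every q ∈ (0,1] there exists C₁ > 0 such that the following holds. Let θ ∈ (0,1) and T ∈ (1, θ^{-1/2}]. Let K₀, K₁ : [−T,0] → (−∞,0] be continuous, and let u₀, u₁ : [−T,0] → [0,∞) be differentiable with u_i'(t) = −u_i(t)² − K_i(t) for all t ∈ [−T,0] (i = 0,1). If |K₀(t) − K₁(t)| ≤ C₀·((u₀(t)^q + u₁(t)^q)·θ^{1/2} + θ) for all t ∈ [−T,0], then |u₀(0) − u₁(0)| ≤ C₁·(θ^{q/2} + T^{-1}). -/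
open Set Real

open MeasureTheory intervalIntegral in
private lemma my_rpow_bound {u T q : ℝ} (hu : 0 ≤ u) (hT : 1 ≤ T) (hq0 : 0 < q) (hq1 : q ≤ 1) :
    u ^ q ≤ T ^ (-q) + u * T ^ (1 - q) := by
  have hT0 : (0:ℝ) < T := lt_of_lt_of_le one_pos hT
  rcases le_total u T⁻¹ with h | h
  · have h1 : u ^ q ≤ (T⁻¹) ^ q := Real.rpow_le_rpow hu h hq0.le
    have h2 : (T⁻¹ : ℝ) ^ q = T ^ (-q) := by
      rw [Real.rpow_neg hT0.le, Real.inv_rpow hT0.le]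
    have h3 : 0 ≤ u * T ^ (1 - q) := mul_nonneg hu (Real.rpow_nonneg hT0.le _)
    linarith [h2 ▸ h1]
  · have hu0 : (0:ℝ) < u := lt_of_lt_of_le (inv_pos.mpr hT0) h
    have h2 : (T⁻¹ : ℝ) ^ (1 - q) ≤ u ^ (1 - q) :=
      Real.rpow_le_rpow (inv_nonneg.mpr hT0.le) h (by linarith)
    have h3 : u ^ q * u ^ (1 - q) = u := by
      rw [← Real.rpow_add hu0]; simp
    have h4 : u ^ q * T⁻¹ ^ (1 - q) ≤ u := by
      calc u ^ q * T⁻¹ ^ (1 - q) ≤ u ^ q * u ^ (1 - q) :=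
            mul_le_mul_of_nonneg_left h2 (Real.rpow_nonneg hu0.le _)
        _ = u := h3
    have h5 : (T⁻¹ : ℝ) ^ (1 - q) = (T ^ (1 - q))⁻¹ := Real.inv_rpow hT0.le _
    have h6 : (0:ℝ) < T ^ (1 - q) := Real.rpow_pos_of_pos hT0 _
    have h7 : u ^ q ≤ u * T ^ (1 - q) := by
      rw [h5] at h4
      calc u ^ q = u ^ q * (T ^ (1-q))⁻¹ * T ^ (1-q) := by field_simp
        _ ≤ u * T ^ (1-q) := mul_le_mul_of_nonneg_right h4 h6.le
    have h8 : (0:ℝ) ≤ T ^ (-q) := Real.rpow_nonneg hT0.le _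
    linarith


set_option maxHeartbeats 1600000 in
open MeasureTheory intervalIntegral in
/-- Key estimate (4.2) in the proof of Theorem 4.5 (logarithmic modulus of continuity
of the Green bundles): for nonnegative Riccati solutions `uᵢ' = -uᵢ² - Kᵢ` on `[-T,0]`
with `1 < T ≤ θ^{-1/2}`, `Kᵢ ≤ 0`, and `|K₀ - K₁| ≤ C₀((u₀^q + u₁^q)θ^{1/2} + θ)`,
one has `|u₀(0) - u₁(0)| ≤ C₁ (θ^{q/2} + T⁻¹)`. -/
theorem riccati_log_modulus_comparison
    (C₀ q : ℝ) (hC₀ : 0 < C₀) (hq : q ∈ Set.Ioc (0:ℝ) 1) :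
    ∃ C₁ : ℝ, 0 < C₁ ∧ ∀ θ : ℝ, θ ∈ Set.Ioo (0:ℝ) 1 →
      ∀ T : ℝ, 1 < T → T ≤ (Real.sqrt θ)⁻¹ →
      ∀ K₀ K₁ u₀ u₁ : ℝ → ℝ,
        ContinuousOn K₀ (Set.Icc (-T) 0) → ContinuousOn K₁ (Set.Icc (-T) 0) →
        (∀ t ∈ Set.Icc (-T) 0, K₀ t ≤ 0) → (∀ t ∈ Set.Icc (-T) 0, K₁ t ≤ 0) →
        (∀ t ∈ Set.Icc (-T) 0, 0 ≤ u₀ t) → (∀ t ∈ Set.Icc (-T) 0, 0 ≤ u₁ t) →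
        (∀ t ∈ Set.Icc (-T) 0,
          HasDerivWithinAt u₀ (-(u₀ t) ^ 2 - K₀ t) (Set.Icc (-T) 0) t) →
        (∀ t ∈ Set.Icc (-T) 0,
          HasDerivWithinAt u₁ (-(u₁ t) ^ 2 - K₁ t) (Set.Icc (-T) 0) t) →
        (∀ t ∈ Set.Icc (-T) 0,
          |K₀ t - K₁ t| ≤ C₀ * ((u₀ t ^ q + u₁ t ^ q) * Real.sqrt θ + θ)) →
        |u₀ 0 - u₁ 0| ≤ C₁ * (θ ^ (q / 2) + T⁻¹) := by
  obtain ⟨hq0, hq1⟩ := hq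
  refine ⟨5 * C₀ + 2, by linarith, ?_⟩
  intro θ hθ T hT1 hTθ K₀ K₁ u₀ u₁ hK₀c hK₁c hK₀n hK₁n hu₀n hu₁n hd₀ hd₁ hK
  obtain ⟨hθ0, hθ1⟩ := hθ
  have hT0 : (0:ℝ) < T := by linarith
  set a : ℝ := -T with ha_def
  have ha0 : a < 0 := by simp only [ha_def]; linarith
  have haI : a ∈ Icc a (0:ℝ) := ⟨le_rfl, ha0.le⟩
  have h0I : (0:ℝ) ∈ Icc a 0 := ⟨ha0.le, le_rfl⟩
  -- basic helpers
  have integ : ∀ (f : ℝ → ℝ), ContinuousOn f (Icc a 0) → ∀ r ∈ Icc a 0,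
      IntervalIntegrable f MeasureTheory.volume a r := by
    intro f hf r hr
    apply ContinuousOn.intervalIntegrable
    rw [uIcc_of_le hr.1]
    exact hf.mono (Icc_subset_Icc le_rfl hr.2)
  have primc : ∀ (f : ℝ → ℝ), ContinuousOn f (Icc a 0) →
      ContinuousOn (fun s => ∫ t in a..s, f t) (Icc a 0) := by
    intro f hf
    have h1 : IntegrableOn f (uIcc a 0) MeasureTheory.volume := by
      rw [uIcc_of_le ha0.le]; exact hf.integrableOn_Icc
    have := intervalIntegral.continuousOn_primitive_interval h1
    rwa [uIcc_of_le ha0.le] at this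
  have primd : ∀ (f : ℝ → ℝ), ContinuousOn f (Icc a 0) → ∀ x ∈ Ioo a 0,
      HasDerivAt (fun s => ∫ t in a..s, f t) (f x) x := by
    intro f hf x hx
    exact intervalIntegral.integral_hasDerivAt_right
      (integ f hf x (Ioo_subset_Icc_self hx))
      (ContinuousOn.stronglyMeasurableAtFilter isOpen_Ioo (hf.mono Ioo_subset_Icc_self) x hx)
      ((hf.mono Ioo_subset_Icc_self).continuousAt (Ioo_mem_nhds hx.1 hx.2))
  have hu₀c : ContinuousOn u₀ (Icc a 0) := fun t ht => (hd₀ t ht).continuousWithinAt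
  have hu₁c : ContinuousOn u₁ (Icc a 0) := fun t ht => (hd₁ t ht).continuousWithinAt
  -- the barrier estimate
  have barrier : ∀ (u K : ℝ → ℝ), ContinuousOn K (Icc a 0) → (∀ t ∈ Icc a 0, K t ≤ 0) →
      (∀ t ∈ Icc a 0, 0 ≤ u t) →
      (∀ t ∈ Icc a 0, HasDerivWithinAt u (-(u t) ^ 2 - K t) (Icc a 0) t) →
      T * u a ≤ Real.exp (∫ t in a..(0:ℝ), u t) := by
    intro u K hKc hKn hun hd
    have huc : ContinuousOn u (Icc a 0) := fun t ht => (hd t ht).continuousWithinAt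
    set A : ℝ → ℝ := fun s => ∫ t in a..s, u t with hA
    have hAc := primc u huc
    have hAd := primd u huc
    have hAa : A a = 0 := intervalIntegral.integral_same
    set g : ℝ → ℝ := fun s => u s * Real.exp (A s) with hg
    have hgc : ContinuousOn g (Icc a 0) := huc.mul (Real.continuous_exp.comp_continuousOn hAc)
    have hgd : ∀ x ∈ Ioo a 0, HasDerivAt g (-K x * Real.exp (A x)) x := by
      intro x hx
      have hxI := Ioo_subset_Icc_self hx
      have hux : HasDerivAt u (-(u x) ^ 2 - K x) x :=
        (hd x hxI).hasDerivAt (Icc_mem_nhds hx.1 hx.2)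
      have hAx : HasDerivAt (fun s => Real.exp (A s)) (Real.exp (A x) * u x) x :=
        (hAd x hx).exp
      have h := hux.mul hAx
      exact h.congr_deriv (by ring)
    have hglb : ∀ r ∈ Icc a 0, u a ≤ g r := by
      intro r hr
      have hftc : ∫ y in a..r, -K y * Real.exp (A y) = g r - g a :=
        intervalIntegral.integral_eq_sub_of_hasDerivAt_of_le hr.1
          (hgc.mono (Icc_subset_Icc le_rfl hr.2))
          (fun x hx => hgd x ⟨hx.1, lt_of_lt_of_le hx.2 hr.2⟩)
          (integ _ ((hKc.neg).mul (Real.continuous_exp.comp_continuousOn hAc)) r hr)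
      have hnn : 0 ≤ ∫ y in a..r, -K y * Real.exp (A y) :=
        intervalIntegral.integral_nonneg hr.1 (fun t ht =>
          mul_nonneg (neg_nonneg.mpr (hKn t ⟨ht.1, le_trans ht.2 hr.2⟩)) (Real.exp_nonneg _))
      have hga : g a = u a := by simp [hg, hAa]
      rw [hftc] at hnn
      linarith
    have hftc2 : ∫ y in a..(0:ℝ), g y = Real.exp (A 0) - Real.exp (A a) :=
      intervalIntegral.integral_eq_sub_of_hasDerivAt_of_le ha0.le
        (Real.continuous_exp.comp_continuousOn hAc)
        (fun x hx => by
          have h := (hAd x hx).exp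
          exact h.congr_deriv (by simp only [hg, hA]; ring))
        (integ g hgc 0 h0I)
    have hmono : (∫ _y in a..(0:ℝ), u a) ≤ ∫ y in a..(0:ℝ), g y :=
      intervalIntegral.integral_mono_on ha0.le intervalIntegrable_const
        (integ g hgc 0 h0I) hglb
    have hconst : (∫ _y in a..(0:ℝ), u a) = T * u a := by
      rw [intervalIntegral.integral_const]
      simp [ha_def]
    rw [hftc2, hAa, Real.exp_zero] at hmono
    rw [hconst] at hmono
    have := Real.exp_pos (A 0)
    linarith
  -- primitives
  set A₀ : ℝ → ℝ := fun s => ∫ t in a..s, u₀ t with hA₀def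
  set A₁ : ℝ → ℝ := fun s => ∫ t in a..s, u₁ t with hA₁def
  have hA₀c : ContinuousOn A₀ (Icc a 0) := primc u₀ hu₀c
  have hA₁c : ContinuousOn A₁ (Icc a 0) := primc u₁ hu₁c
  have hA₀d : ∀ x ∈ Ioo a 0, HasDerivAt A₀ (u₀ x) x := primd u₀ hu₀c
  have hA₁d : ∀ x ∈ Ioo a 0, HasDerivAt A₁ (u₁ x) x := primd u₁ hu₁c
  have hA₀a : A₀ a = 0 := intervalIntegral.integral_same
  have hA₁a : A₁ a = 0 := intervalIntegral.integral_same
  have hA₀nn : ∀ s ∈ Icc a 0, 0 ≤ A₀ s := fun s hs =>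
    intervalIntegral.integral_nonneg hs.1 (fun t ht => hu₀n t ⟨ht.1, le_trans ht.2 hs.2⟩)
  have hA₁nn : ∀ s ∈ Icc a 0, 0 ≤ A₁ s := fun s hs =>
    intervalIntegral.integral_nonneg hs.1 (fun t ht => hu₁n t ⟨ht.1, le_trans ht.2 hs.2⟩)
  have hsplit : ∀ (f : ℝ → ℝ), ContinuousOn f (Icc a 0) → ∀ s ∈ Icc a 0,
      (∫ t in a..s, f t) + ∫ t in s..(0:ℝ), f t = ∫ t in a..(0:ℝ), f t := by
    intro f hf s hs
    refine intervalIntegral.integral_add_adjacent_intervals (integ f hf s hs) ?_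
    apply ContinuousOn.intervalIntegrable
    rw [uIcc_of_le hs.2]
    exact hf.mono (Icc_subset_Icc hs.1 le_rfl)
  have hA₀le : ∀ s ∈ Icc a 0, A₀ s ≤ A₀ 0 := by
    intro s hs
    have h1 := hsplit u₀ hu₀c s hs
    have h2 : 0 ≤ ∫ t in s..(0:ℝ), u₀ t :=
      intervalIntegral.integral_nonneg hs.2 (fun t ht => hu₀n t ⟨le_trans hs.1 ht.1, ht.2⟩)
    simp only [hA₀def]
    linarith [h1]
  have hA₁le : ∀ s ∈ Icc a 0, A₁ s ≤ A₁ 0 := by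
    intro s hs
    have h1 := hsplit u₁ hu₁c s hs
    have h2 : 0 ≤ ∫ t in s..(0:ℝ), u₁ t :=
      intervalIntegral.integral_nonneg hs.2 (fun t ht => hu₁n t ⟨le_trans hs.1 ht.1, ht.2⟩)
    simp only [hA₁def]
    linarith [h1]
  -- main FTC identity
  set φ : ℝ → ℝ := fun s => (u₀ s - u₁ s) * Real.exp (A₀ s + A₁ s) with hφdef
  have hEc : ContinuousOn (fun s => Real.exp (A₀ s + A₁ s)) (Icc a 0) :=
    Real.continuous_exp.comp_continuousOn (hA₀c.add hA₁c)
  have hφc : ContinuousOn φ (Icc a 0) := (hu₀c.sub hu₁c).mul hEc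
  have hφd : ∀ x ∈ Ioo a 0, HasDerivAt φ ((K₁ x - K₀ x) * Real.exp (A₀ x + A₁ x)) x := by
    intro x hx
    have hxI := Ioo_subset_Icc_self hx
    have h0 : HasDerivAt u₀ (-(u₀ x) ^ 2 - K₀ x) x :=
      (hd₀ x hxI).hasDerivAt (Icc_mem_nhds hx.1 hx.2)
    have h1 : HasDerivAt u₁ (-(u₁ x) ^ 2 - K₁ x) x :=
      (hd₁ x hxI).hasDerivAt (Icc_mem_nhds hx.1 hx.2)
    have hE : HasDerivAt (fun s => Real.exp (A₀ s + A₁ s))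
        (Real.exp (A₀ x + A₁ x) * (u₀ x + u₁ x)) x := ((hA₀d x hx).add (hA₁d x hx)).exp
    have h := (h0.sub h1).mul hE
    exact h.congr_deriv (by simp only [Pi.sub_apply]; ring)
  have hKdiffc : ContinuousOn (fun s => (K₁ s - K₀ s) * Real.exp (A₀ s + A₁ s)) (Icc a 0) :=
    (hK₁c.sub hK₀c).mul hEc
  have hmain : ∫ y in a..(0:ℝ), (K₁ y - K₀ y) * Real.exp (A₀ y + A₁ y) = φ 0 - φ a :=
    intervalIntegral.integral_eq_sub_of_hasDerivAt_of_le ha0.le hφc hφd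
      (integ _ hKdiffc 0 h0I)
  -- numeric facts
  set sθ : ℝ := Real.sqrt θ with hsθdef
  have hsθ0 : 0 < sθ := Real.sqrt_pos.mpr hθ0
  have hsθrpow : sθ = θ ^ (1/2 : ℝ) := Real.sqrt_eq_rpow θ
  have hTT : T ^ (-q) * T = T ^ (1 - q) := by
    have h : T ^ (-q + 1 : ℝ) = T ^ (-q) * T ^ (1:ℝ) := Real.rpow_add hT0 (-q) 1
    rw [Real.rpow_one] at h
    rw [← h]; congr 1; ring
  have hnum1 : sθ * T ^ (1 - q) ≤ θ ^ (q/2) := by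
    have ha1 : T ^ (1-q) ≤ (sθ⁻¹) ^ (1-q) :=
      Real.rpow_le_rpow hT0.le hTθ (by linarith)
    have ha2 : (sθ⁻¹ : ℝ) ^ (1-q) = θ ^ (-(1/2 : ℝ) * (1-q)) := by
      rw [hsθrpow, ← Real.rpow_neg hθ0.le, ← Real.rpow_mul hθ0.le]
    have ha3 : sθ * θ ^ (-(1/2 : ℝ) * (1-q)) = θ ^ (q/2) := by
      rw [hsθrpow, ← Real.rpow_add hθ0]
      congr 1; ring
    calc sθ * T ^ (1-q) ≤ sθ * (sθ⁻¹) ^ (1-q) :=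
          mul_le_mul_of_nonneg_left ha1 hsθ0.le
      _ = sθ * θ ^ (-(1/2 : ℝ) * (1-q)) := by rw [ha2]
      _ = θ ^ (q/2) := ha3
  have hhalf : θ ^ (1/2 : ℝ) ≤ θ ^ (q/2) :=
    Real.rpow_le_rpow_of_exponent_ge hθ0 hθ1.le (by linarith)
  have hnum2 : θ * T ≤ θ ^ (q/2) := by
    have hb1 : θ * T ≤ θ * sθ⁻¹ := mul_le_mul_of_nonneg_left hTθ hθ0.le
    have hb2 : θ * sθ⁻¹ = θ ^ (1/2 : ℝ) := by
      calc θ * sθ⁻¹ = θ ^ (1:ℝ) * θ ^ (-(1/2):ℝ) := by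
            rw [Real.rpow_one, hsθrpow, Real.rpow_neg hθ0.le]
        _ = θ ^ ((1:ℝ) + -(1/2)) := (Real.rpow_add hθ0 _ _).symm
        _ = θ ^ (1/2:ℝ) := by norm_num
    calc θ * T ≤ θ * sθ⁻¹ := hb1
      _ = θ ^ (1/2:ℝ) := hb2
      _ ≤ θ ^ (q/2) := hhalf
  -- dominating function
  set cE : ℝ := C₀ * (2 * sθ * T ^ (-q) + θ) with hcEdef
  set c0 : ℝ := C₀ * sθ * T ^ (1 - q) * Real.exp (A₁ 0) with hc0def
  set c1 : ℝ := C₀ * sθ * T ^ (1 - q) * Real.exp (A₀ 0) with hc1def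
  set g : ℝ → ℝ := fun s => cE * Real.exp (A₀ s + A₁ s)
      + c0 * (u₀ s * Real.exp (A₀ s)) + c1 * (u₁ s * Real.exp (A₁ s)) with hgdef
  have hTq : (0:ℝ) ≤ T ^ (1 - q) := Real.rpow_nonneg hT0.le _
  have hpoint : ∀ y ∈ Icc a 0, |(K₁ y - K₀ y) * Real.exp (A₀ y + A₁ y)| ≤ g y := by
    intro y hy
    have hEpos : (0:ℝ) < Real.exp (A₀ y + A₁ y) := Real.exp_pos _
    have hEeq : Real.exp (A₀ y + A₁ y) = Real.exp (A₀ y) * Real.exp (A₁ y) := Real.exp_add _ _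
    have hKb : |K₁ y - K₀ y| ≤ C₀ * ((u₀ y ^ q + u₁ y ^ q) * sθ + θ) := by
      rw [abs_sub_comm]; exact hK y hy
    have e1 : u₀ y ^ q * Real.exp (A₀ y + A₁ y)
        ≤ T ^ (-q) * Real.exp (A₀ y + A₁ y)
          + T ^ (1-q) * (u₀ y * Real.exp (A₀ y) * Real.exp (A₁ 0)) := by
      have b1 := my_rpow_bound (hu₀n y hy) hT1.le hq0 hq1
      have b2 : u₀ y * Real.exp (A₀ y + A₁ y) ≤ u₀ y * Real.exp (A₀ y) * Real.exp (A₁ 0) := by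
        rw [hEeq, ← mul_assoc]
        exact mul_le_mul_of_nonneg_left (Real.exp_le_exp.mpr (hA₁le y hy))
          (mul_nonneg (hu₀n y hy) (Real.exp_nonneg _))
      calc u₀ y ^ q * Real.exp (A₀ y + A₁ y)
          ≤ (T ^ (-q) + u₀ y * T ^ (1-q)) * Real.exp (A₀ y + A₁ y) :=
            mul_le_mul_of_nonneg_right b1 hEpos.le
        _ = T ^ (-q) * Real.exp (A₀ y + A₁ y)
            + T ^ (1-q) * (u₀ y * Real.exp (A₀ y + A₁ y)) := by ring
        _ ≤ _ := by linarith [mul_le_mul_of_nonneg_left b2 hTq]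
    have e2 : u₁ y ^ q * Real.exp (A₀ y + A₁ y)
        ≤ T ^ (-q) * Real.exp (A₀ y + A₁ y)
          + T ^ (1-q) * (u₁ y * Real.exp (A₁ y) * Real.exp (A₀ 0)) := by
      have b1 := my_rpow_bound (hu₁n y hy) hT1.le hq0 hq1
      have b2 : u₁ y * Real.exp (A₀ y + A₁ y) ≤ u₁ y * Real.exp (A₁ y) * Real.exp (A₀ 0) := by
        rw [hEeq]
        have : u₁ y * (Real.exp (A₀ y) * Real.exp (A₁ y))
            = u₁ y * Real.exp (A₁ y) * Real.exp (A₀ y) := by ring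
        rw [this]
        exact mul_le_mul_of_nonneg_left (Real.exp_le_exp.mpr (hA₀le y hy))
          (mul_nonneg (hu₁n y hy) (Real.exp_nonneg _))
      calc u₁ y ^ q * Real.exp (A₀ y + A₁ y)
          ≤ (T ^ (-q) + u₁ y * T ^ (1-q)) * Real.exp (A₀ y + A₁ y) :=
            mul_le_mul_of_nonneg_right b1 hEpos.le
        _ = T ^ (-q) * Real.exp (A₀ y + A₁ y)
            + T ^ (1-q) * (u₁ y * Real.exp (A₀ y + A₁ y)) := by ring
        _ ≤ _ := by linarith [mul_le_mul_of_nonneg_left b2 hTq]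
    have hCs : (0:ℝ) ≤ C₀ * sθ := mul_nonneg hC₀.le hsθ0.le
    have E1 := mul_le_mul_of_nonneg_left e1 hCs
    have E2 := mul_le_mul_of_nonneg_left e2 hCs
    calc |(K₁ y - K₀ y) * Real.exp (A₀ y + A₁ y)|
        = |K₁ y - K₀ y| * Real.exp (A₀ y + A₁ y) := by
          rw [abs_mul, abs_of_pos hEpos]
      _ ≤ (C₀ * ((u₀ y ^ q + u₁ y ^ q) * sθ + θ)) * Real.exp (A₀ y + A₁ y) :=
          mul_le_mul_of_nonneg_right hKb hEpos.le
      _ = (C₀ * sθ) * (u₀ y ^ q * Real.exp (A₀ y + A₁ y))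
          + (C₀ * sθ) * (u₁ y ^ q * Real.exp (A₀ y + A₁ y))
          + (C₀ * θ) * Real.exp (A₀ y + A₁ y) := by ring
      _ ≤ g y := by
          simp only [hgdef, hcEdef, hc0def, hc1def]
          linarith [E1, E2]
  -- integral computations
  have hf1 : ContinuousOn (fun s => cE * Real.exp (A₀ s + A₁ s)) (Icc a 0) :=
    continuousOn_const.mul hEc
  have hE₀c : ContinuousOn (fun s => u₀ s * Real.exp (A₀ s)) (Icc a 0) :=
    hu₀c.mul (Real.continuous_exp.comp_continuousOn hA₀c)
  have hE₁c : ContinuousOn (fun s => u₁ s * Real.exp (A₁ s)) (Icc a 0) :=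
    hu₁c.mul (Real.continuous_exp.comp_continuousOn hA₁c)
  have hf2 : ContinuousOn (fun s => c0 * (u₀ s * Real.exp (A₀ s))) (Icc a 0) :=
    continuousOn_const.mul hE₀c
  have hf3 : ContinuousOn (fun s => c1 * (u₁ s * Real.exp (A₁ s))) (Icc a 0) :=
    continuousOn_const.mul hE₁c
  have hgc : ContinuousOn g (Icc a 0) := (hf1.add hf2).add hf3
  have hIg : (∫ y in a..(0:ℝ), g y)
      = cE * (∫ y in a..(0:ℝ), Real.exp (A₀ y + A₁ y))
        + c0 * (∫ y in a..(0:ℝ), u₀ y * Real.exp (A₀ y))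
        + c1 * (∫ y in a..(0:ℝ), u₁ y * Real.exp (A₁ y)) := by
    simp only [hgdef]
    rw [intervalIntegral.integral_add ((integ _ hf1 0 h0I).add (integ _ hf2 0 h0I))
        (integ _ hf3 0 h0I),
      intervalIntegral.integral_add (integ _ hf1 0 h0I) (integ _ hf2 0 h0I),
      intervalIntegral.integral_const_mul, intervalIntegral.integral_const_mul,
      intervalIntegral.integral_const_mul]
  have hIE : (∫ y in a..(0:ℝ), Real.exp (A₀ y + A₁ y)) ≤ T * Real.exp (A₀ 0 + A₁ 0) := by
    calc (∫ y in a..(0:ℝ), Real.exp (A₀ y + A₁ y))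
        ≤ ∫ _y in a..(0:ℝ), Real.exp (A₀ 0 + A₁ 0) :=
          intervalIntegral.integral_mono_on ha0.le (integ _ hEc 0 h0I)
            intervalIntegrable_const
            (fun y hy => Real.exp_le_exp.mpr (add_le_add (hA₀le y hy) (hA₁le y hy)))
      _ = T * Real.exp (A₀ 0 + A₁ 0) := by
          rw [intervalIntegral.integral_const]; simp [ha_def]
  have hI₀ : (∫ y in a..(0:ℝ), u₀ y * Real.exp (A₀ y)) = Real.exp (A₀ 0) - 1 := by
    have hftc := intervalIntegral.integral_eq_sub_of_hasDerivAt_of_le ha0.le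
      (Real.continuous_exp.comp_continuousOn hA₀c)
      (fun x hx => by
        have h := (hA₀d x hx).exp
        exact h.congr_deriv (by ring))
      (integ _ hE₀c 0 h0I)
    rw [hftc]
    simp [Function.comp, hA₀a]
  have hI₁ : (∫ y in a..(0:ℝ), u₁ y * Real.exp (A₁ y)) = Real.exp (A₁ 0) - 1 := by
    have hftc := intervalIntegral.integral_eq_sub_of_hasDerivAt_of_le ha0.le
      (Real.continuous_exp.comp_continuousOn hA₁c)
      (fun x hx => by
        have h := (hA₁d x hx).exp
        exact h.congr_deriv (by ring))
      (integ _ hE₁c 0 h0I)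
    rw [hftc]
    simp [Function.comp, hA₁a]
  have hI₀le : (∫ y in a..(0:ℝ), u₀ y * Real.exp (A₀ y)) ≤ Real.exp (A₀ 0) := by
    rw [hI₀]; linarith
  have hI₁le : (∫ y in a..(0:ℝ), u₁ y * Real.exp (A₁ y)) ≤ Real.exp (A₁ 0) := by
    rw [hI₁]; linarith
  have hcEnn : (0:ℝ) ≤ cE := by
    simp only [hcEdef]
    exact mul_nonneg hC₀.le (add_nonneg (mul_nonneg
      (mul_nonneg (by norm_num) hsθ0.le) (Real.rpow_nonneg hT0.le (-q))) hθ0.le)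
  have hc0nn : (0:ℝ) ≤ c0 := by
    simp only [hc0def]
    exact mul_nonneg (mul_nonneg (mul_nonneg hC₀.le hsθ0.le) hTq) (Real.exp_nonneg _)
  have hc1nn : (0:ℝ) ≤ c1 := by
    simp only [hc1def]
    exact mul_nonneg (mul_nonneg (mul_nonneg hC₀.le hsθ0.le) hTq) (Real.exp_nonneg _)
  have hEadd0 : Real.exp (A₀ 0 + A₁ 0) = Real.exp (A₀ 0) * Real.exp (A₁ 0) := Real.exp_add _ _
  have hJ : (∫ y in a..(0:ℝ), g y) ≤ (5 * C₀ * θ ^ (q/2)) * Real.exp (A₀ 0 + A₁ 0) := by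
    have h1 := mul_le_mul_of_nonneg_left hIE hcEnn
    have h2 := mul_le_mul_of_nonneg_left hI₀le hc0nn
    have h3 := mul_le_mul_of_nonneg_left hI₁le hc1nn
    have h4 : c0 * Real.exp (A₀ 0) = C₀ * sθ * T ^ (1-q) * Real.exp (A₀ 0 + A₁ 0) := by
      rw [hEadd0, hc0def]; ring
    have h5 : c1 * Real.exp (A₁ 0) = C₀ * sθ * T ^ (1-q) * Real.exp (A₀ 0 + A₁ 0) := by
      rw [hEadd0, hc1def]; ring
    have h6 : cE * T + 2 * (C₀ * sθ * T ^ (1-q)) ≤ 5 * C₀ * θ ^ (q/2) := by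
      have k1 := mul_le_mul_of_nonneg_left hnum1 (show (0:ℝ) ≤ 4*C₀ by linarith)
      have k2 := mul_le_mul_of_nonneg_left hnum2 hC₀.le
      have k3 : 2 * C₀ * (sθ * T ^ (-q) * T) = 2 * C₀ * (sθ * T ^ (1-q)) := by
        rw [mul_assoc sθ, hTT]
      simp only [hcEdef]
      linarith [k1, k2, k3]
    have h6' := mul_le_mul_of_nonneg_right h6 (Real.exp_nonneg (A₀ 0 + A₁ 0))
    rw [hIg]
    linarith [h1, h2, h3, h4, h5, h6']
  -- final assembly
  have hb₀ : T * u₀ a ≤ Real.exp (A₀ 0) := barrier u₀ K₀ hK₀c hK₀n hu₀n hd₀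
  have hb₁ : T * u₁ a ≤ Real.exp (A₁ 0) := barrier u₁ K₁ hK₁c hK₁n hu₁n hd₁
  have hexp₀ : Real.exp (A₀ 0) ≤ Real.exp (A₀ 0 + A₁ 0) := by
    rw [hEadd0]
    calc Real.exp (A₀ 0) = Real.exp (A₀ 0) * 1 := (mul_one _).symm
      _ ≤ Real.exp (A₀ 0) * Real.exp (A₁ 0) :=
        mul_le_mul_of_nonneg_left (Real.one_le_exp (hA₁nn 0 h0I)) (Real.exp_nonneg _)
  have hexp₁ : Real.exp (A₁ 0) ≤ Real.exp (A₀ 0 + A₁ 0) := by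
    rw [hEadd0]
    calc Real.exp (A₁ 0) = 1 * Real.exp (A₁ 0) := (one_mul _).symm
      _ ≤ Real.exp (A₀ 0) * Real.exp (A₁ 0) :=
        mul_le_mul_of_nonneg_right (Real.one_le_exp (hA₀nn 0 h0I)) (Real.exp_nonneg _)
  have h8 : u₀ a ≤ T⁻¹ * Real.exp (A₀ 0 + A₁ 0) := by
    calc u₀ a = T⁻¹ * (T * u₀ a) := by field_simp
      _ ≤ T⁻¹ * Real.exp (A₀ 0 + A₁ 0) :=
        mul_le_mul_of_nonneg_left (hb₀.trans hexp₀) (inv_nonneg.mpr hT0.le)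
  have h9 : u₁ a ≤ T⁻¹ * Real.exp (A₀ 0 + A₁ 0) := by
    calc u₁ a = T⁻¹ * (T * u₁ a) := by field_simp
      _ ≤ T⁻¹ * Real.exp (A₀ 0 + A₁ 0) :=
        mul_le_mul_of_nonneg_left (hb₁.trans hexp₁) (inv_nonneg.mpr hT0.le)
  have hφa : φ a = u₀ a - u₁ a := by
    simp only [hφdef]
    rw [hA₀a, hA₁a]
    norm_num
  have hφaabs : |φ a| ≤ u₀ a + u₁ a := by
    rw [hφa, abs_sub_le_iff]
    constructor <;> linarith [hu₀n a haI, hu₁n a haI]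
  have hIntb : |∫ y in a..(0:ℝ), (K₁ y - K₀ y) * Real.exp (A₀ y + A₁ y)|
      ≤ ∫ y in a..(0:ℝ), g y := by
    calc |∫ y in a..(0:ℝ), (K₁ y - K₀ y) * Real.exp (A₀ y + A₁ y)|
        ≤ ∫ y in a..(0:ℝ), |(K₁ y - K₀ y) * Real.exp (A₀ y + A₁ y)| :=
          intervalIntegral.abs_integral_le_integral_abs ha0.le
      _ ≤ ∫ y in a..(0:ℝ), g y :=
          intervalIntegral.integral_mono_on ha0.le (integ _ hKdiffc 0 h0I).abs
            (integ g hgc 0 h0I) hpoint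
  have hφ0eq : φ 0 = φ a + ∫ y in a..(0:ℝ), (K₁ y - K₀ y) * Real.exp (A₀ y + A₁ y) := by
    linarith [hmain]
  have habs0 : |u₀ 0 - u₁ 0| * Real.exp (A₀ 0 + A₁ 0) = |φ 0| := by
    simp only [hφdef]
    rw [abs_mul, abs_of_pos (Real.exp_pos _)]
  have hfinal : |u₀ 0 - u₁ 0| * Real.exp (A₀ 0 + A₁ 0)
      ≤ (2 * T⁻¹ + 5 * C₀ * θ ^ (q/2)) * Real.exp (A₀ 0 + A₁ 0) := by
    rw [habs0, hφ0eq]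
    have h7 := (abs_add_le (φ a) _).trans (add_le_add hφaabs hIntb)
    linarith [hJ, h7, h8, h9]
  have hw := le_of_mul_le_mul_right hfinal (Real.exp_pos (A₀ 0 + A₁ 0))
  linarith [hw, Real.rpow_nonneg hθ0.le (q/2), inv_nonneg.mpr hT0.le,
    mul_nonneg hC₀.le (inv_nonneg.mpr hT0.le),
    mul_nonneg hC₀.le (Real.rpow_nonneg hθ0.le (q/2))]
end

section
/- Fix r > 4 and δ > 0, and define k : [0,δ] → ℝ by k(a) = r(r−1)·a^{r−2} / ((1 + a^r)·(1 + r²·a^{2(r−1)})²). Then there exists a constant C > 0 such that |k(a₀) − k(a₁)| ≤ C · max{k(a₀), k(a₁)}^{(r−3)/(r−2)} · |a₀ − a₁| for all a₀, a₁ ∈ [0,δ]. -/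
open Set Real

noncomputable section

/-- Lipschitz-type bound for `t ↦ t ^ p` on nonnegative reals, `p ≥ 1`. -/
lemma rpow_lip {p : ℝ} (hp : 1 ≤ p) {x y : ℝ} (hx : 0 ≤ x) (hy : 0 ≤ y) :
    |x ^ p - y ^ p| ≤ p * max x y ^ (p - 1) * |x - y| := by
  have hxM : x ≤ max x y := le_max_left _ _
  have hyM : y ≤ max x y := le_max_right _ _
  have key : ∀ t ∈ Icc (0:ℝ) (max x y), HasDerivWithinAt (fun s : ℝ => s ^ p)
      ((fun t : ℝ => p * t ^ (p - 1)) t) (Icc (0:ℝ) (max x y)) t := fun t _ =>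
    (Real.hasDerivAt_rpow_const (Or.inr hp)).hasDerivWithinAt
  have bound : ∀ t ∈ Icc (0:ℝ) (max x y),
      ‖(fun t : ℝ => p * t ^ (p - 1)) t‖ ≤ p * max x y ^ (p - 1) := by
    intro t ht
    rw [Real.norm_eq_abs, abs_mul, abs_of_nonneg (by linarith : (0:ℝ) ≤ p),
        abs_of_nonneg (Real.rpow_nonneg ht.1 _)]
    exact mul_le_mul_of_nonneg_left (Real.rpow_le_rpow ht.1 ht.2 (by linarith)) (by linarith)
  have h := (convex_Icc (0:ℝ) (max x y)).norm_image_sub_le_of_norm_hasDerivWithin_le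
    key bound ⟨hy, hyM⟩ ⟨hx, hxM⟩
  simpa [Real.norm_eq_abs] using h

/-- Minus the Gauss curvature on the neck of the surface of revolution with profile
`ξ(s) = 1 + (s - L)^r`, as a function of the distance `a = s - L` from the flat
cylinder: `k(a) = ξ''/(ξ(1+ξ'²)²)` with `ξ' = r a^{r-1}`, `ξ'' = r(r-1) a^{r-2}`. -/
def neckCurv (r : ℝ) (a : ℝ) : ℝ :=
  r * (r - 1) * a ^ (r - 2) / ((1 + a ^ r) * (1 + r ^ 2 * a ^ (2 * (r - 1))) ^ 2)

set_option maxHeartbeats 1000000 in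
/-- One-variable content of Lemma 4.3(2): the intrinsic Hölder--Lipschitz bound
`|k(a₀) - k(a₁)| ≤ C max{k(a₀), k(a₁)}^{(r-3)/(r-2)} |a₀ - a₁|` on `[0, δ]`. -/
theorem neckCurv_intrinsic_lipschitz
    (r δ : ℝ) (hr : 4 < r) (hδ : 0 < δ) :
    ∃ C : ℝ, 0 < C ∧ ∀ a₀ ∈ Set.Icc (0:ℝ) δ, ∀ a₁ ∈ Set.Icc (0:ℝ) δ,
      |neckCurv r a₀ - neckCurv r a₁| ≤
        C * max (neckCurv r a₀) (neckCurv r a₁) ^ ((r - 3) / (r - 2)) * |a₀ - a₁| := by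
  set c : ℝ := r * (r - 1) with hc
  have hcpos : 0 < c := by nlinarith
  set q : ℝ := 2 * (r - 1) with hq
  have hq1 : 1 ≤ q := by simp only [hq]; linarith
  have hr1 : (1:ℝ) ≤ r := by linarith
  have hr2 : (1:ℝ) ≤ r - 2 := by linarith
  set Mg : ℝ := (1 + δ ^ r) * (1 + r ^ 2 * δ ^ q) ^ 2 with hMg
  have hδr : 0 ≤ δ ^ r := Real.rpow_nonneg hδ.le _
  have hδq : 0 ≤ δ ^ q := Real.rpow_nonneg hδ.le _
  have hzδ : 0 ≤ r ^ 2 * δ ^ q := mul_nonneg (sq_nonneg r) hδq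
  have hMgpos : 0 < Mg :=
    mul_pos (by linarith only [hδr]) (pow_pos (by linarith only [hzδ]) 2)
  set L : ℝ := r * δ ^ (r - 1) * (1 + r ^ 2 * δ ^ q) ^ 2
      + (1 + δ ^ r) * (r ^ 2 * (q * δ ^ (q - 1))) * (2 * (1 + r ^ 2 * δ ^ q)) with hL
  have hLnn : 0 ≤ L := by
    have h1 : 0 ≤ δ ^ (r-1) := Real.rpow_nonneg hδ.le _
    have h2 : 0 ≤ δ ^ (q-1) := Real.rpow_nonneg hδ.le _
    refine add_nonneg (mul_nonneg (mul_nonneg (by linarith only [hr]) h1) (sq_nonneg _)) ?_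
    exact mul_nonneg (mul_nonneg (by linarith only [hδr])
      (mul_nonneg (sq_nonneg r) (mul_nonneg (by linarith only [hq1]) h2)))
      (by linarith only [hzδ])
  set θ : ℝ := (r - 3) / (r - 2) with hθ
  have hθpos : 0 < θ := div_pos (by linarith only [hr]) (by linarith only [hr])
  set C₁ : ℝ := c * ((r - 2) + δ * L) with hC₁
  have hC₁pos : 0 < C₁ := by
    have h' : 0 ≤ δ * L := mul_nonneg hδ.le hLnn
    have h : (0:ℝ) < (r - 2) + δ * L := by linarith only [h', hr]
    exact mul_pos hcpos h
  set C₂ : ℝ := (Mg / c) ^ θ with hC₂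
  have hC₂pos : 0 < C₂ := Real.rpow_pos_of_pos (div_pos hMgpos hcpos) _
  refine ⟨C₁ * C₂, mul_pos hC₁pos hC₂pos, ?_⟩
  intro a₀ ha₀ a₁ ha₁
  obtain ⟨h0l, h0r⟩ := ha₀
  obtain ⟨h1l, h1r⟩ := ha₁
  -- trivial case
  rcases eq_or_ne a₀ a₁ with heq | hne
  · simp [heq]
  set m : ℝ := max a₀ a₁ with hm
  have hmnn : 0 ≤ m := le_trans h0l (le_max_left _ _)
  have hmδ : m ≤ δ := max_le h0r h1r
  have hmpos : 0 < m := by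
    rcases hmnn.lt_or_eq with h | h
    · exact h
    · exfalso
      have h0 : a₀ = 0 := le_antisymm (le_trans (le_max_left _ _) h.symm.le) h0l
      have h1 : a₁ = 0 := le_antisymm (le_trans (le_max_right _ _) h.symm.le) h1l
      exact hne (h0.trans h1.symm)
  -- facts about the denominator
  have gfact : ∀ a ∈ Icc (0:ℝ) δ,
      1 ≤ (1 + a ^ r) * (1 + r ^ 2 * a ^ q) ^ 2 ∧
      (1 + a ^ r) * (1 + r ^ 2 * a ^ q) ^ 2 ≤ Mg := by
    intro a ⟨hal, har⟩
    have h1 : 0 ≤ a ^ r := Real.rpow_nonneg hal _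
    have h2 : 0 ≤ a ^ q := Real.rpow_nonneg hal _
    have h3 : a ^ r ≤ δ ^ r := Real.rpow_le_rpow hal har (by linarith only [hr])
    have h4 : a ^ q ≤ δ ^ q := Real.rpow_le_rpow hal har (by linarith only [hq1])
    have hy : 0 ≤ r ^ 2 * a ^ q := mul_nonneg (sq_nonneg r) h2
    constructor
    · have e1 : (1:ℝ) ≤ 1 + a ^ r := by linarith only [h1]
      have e2 : (1:ℝ) ≤ (1 + r ^ 2 * a ^ q) ^ 2 :=
        one_le_pow₀ (by linarith only [hy])
      have := mul_le_mul e1 e2 zero_le_one (by linarith only [h1])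
      linarith only [this]
    · rw [hMg]
      have hb1 : 1 + a ^ r ≤ 1 + δ ^ r := by linarith only [h3]
      have hb2' : r ^ 2 * a ^ q ≤ r ^ 2 * δ ^ q := mul_le_mul_of_nonneg_left h4 (sq_nonneg r)
      have hb2 : (1 + r ^ 2 * a ^ q) ^ 2 ≤ (1 + r ^ 2 * δ ^ q) ^ 2 :=
        pow_le_pow_left₀ (by linarith only [hy]) (by linarith only [hb2']) 2
      exact mul_le_mul hb1 hb2 (sq_nonneg _) (by linarith only [hδr])
  set g₀ : ℝ := (1 + a₀ ^ r) * (1 + r ^ 2 * a₀ ^ q) ^ 2 with hg₀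
  set g₁ : ℝ := (1 + a₁ ^ r) * (1 + r ^ 2 * a₁ ^ q) ^ 2 with hg₁
  obtain ⟨hg₀1, hg₀M⟩ := gfact a₀ ⟨h0l, h0r⟩
  obtain ⟨hg₁1, hg₁M⟩ := gfact a₁ ⟨h1l, h1r⟩
  rw [← hg₀] at hg₀1 hg₀M
  rw [← hg₁] at hg₁1 hg₁M
  have hg₀pos : 0 < g₀ := lt_of_lt_of_le one_pos hg₀1
  have hg₁pos : 0 < g₁ := lt_of_lt_of_le one_pos hg₁1
  set f₀ : ℝ := a₀ ^ (r - 2) with hf₀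
  set f₁ : ℝ := a₁ ^ (r - 2) with hf₁
  have hf₀nn : 0 ≤ f₀ := Real.rpow_nonneg h0l _
  have hf₁nn : 0 ≤ f₁ := Real.rpow_nonneg h1l _
  have hk₀ : neckCurv r a₀ = c * f₀ / g₀ := rfl
  have hk₁ : neckCurv r a₁ = c * f₁ / g₁ := rfl
  have hm3nn : 0 ≤ m ^ (r - 3) := Real.rpow_nonneg hmnn _
  -- bound |f₀ - f₁|
  have hfdiff : |f₀ - f₁| ≤ (r - 2) * m ^ (r - 3) * |a₀ - a₁| := by
    have h := rpow_lip hr2 h0l h1l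
    have he : r - 2 - 1 = r - 3 := by ring
    rwa [he, ← hm] at h
  -- bound f₁
  have hf₁le : f₁ ≤ δ * m ^ (r - 3) := by
    have h1 : f₁ ≤ m ^ (r - 2) := Real.rpow_le_rpow h1l (le_max_right _ _) (by linarith)
    have h2 : m ^ (r - 2) = m ^ (r - 3) * m := by
      rw [show r - 2 = (r - 3) + 1 by ring, Real.rpow_add hmpos, Real.rpow_one]
    calc f₁ ≤ m ^ (r - 3) * m := h2 ▸ h1
      _ ≤ m ^ (r - 3) * δ := mul_le_mul_of_nonneg_left hmδ hm3nn
      _ = δ * m ^ (r - 3) := by ring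
  -- bound |g₀ - g₁|
  have hgdiff : |g₀ - g₁| ≤ L * |a₀ - a₁| := by
    have hPd : |a₀ ^ r - a₁ ^ r| ≤ r * δ ^ (r - 1) * |a₀ - a₁| := by
      have h := rpow_lip hr1 h0l h1l
      have h2 : max a₀ a₁ ^ (r-1) ≤ δ ^ (r-1) := Real.rpow_le_rpow hmnn hmδ (by linarith only [hr])
      calc |a₀ ^ r - a₁ ^ r| ≤ r * max a₀ a₁ ^ (r-1) * |a₀ - a₁| := h
        _ ≤ r * δ ^ (r-1) * |a₀ - a₁| :=
            mul_le_mul_of_nonneg_right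
              (mul_le_mul_of_nonneg_left h2 (by linarith only [hr] : (0:ℝ) ≤ r)) (abs_nonneg _)
    have hQd : |a₀ ^ q - a₁ ^ q| ≤ q * δ ^ (q - 1) * |a₀ - a₁| := by
      have h := rpow_lip hq1 h0l h1l
      have h2 : max a₀ a₁ ^ (q-1) ≤ δ ^ (q-1) := Real.rpow_le_rpow hmnn hmδ (by linarith only [hq1])
      calc |a₀ ^ q - a₁ ^ q| ≤ q * max a₀ a₁ ^ (q-1) * |a₀ - a₁| := h
        _ ≤ q * δ ^ (q-1) * |a₀ - a₁| :=
            mul_le_mul_of_nonneg_right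
              (mul_le_mul_of_nonneg_left h2 (by linarith only [hq1] : (0:ℝ) ≤ q)) (abs_nonneg _)
    have h1 : 0 ≤ a₀ ^ r := Real.rpow_nonneg h0l _
    have h2 : 0 ≤ a₀ ^ q := Real.rpow_nonneg h0l _
    have h1' : 0 ≤ a₁ ^ r := Real.rpow_nonneg h1l _
    have h2' : 0 ≤ a₁ ^ q := Real.rpow_nonneg h1l _
    have h4 : a₀ ^ q ≤ δ ^ q := Real.rpow_le_rpow h0l h0r (by linarith only [hq1])
    have h3' : a₁ ^ r ≤ δ ^ r := Real.rpow_le_rpow h1l h1r (by linarith only [hr])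
    have h4' : a₁ ^ q ≤ δ ^ q := Real.rpow_le_rpow h1l h1r (by linarith only [hq1])
    have hdec : g₀ - g₁ = (a₀ ^ r - a₁ ^ r) * (1 + r ^ 2 * a₀ ^ q) ^ 2
        + (1 + a₁ ^ r) * ((r ^ 2 * (a₀ ^ q - a₁ ^ q))
          * ((1 + r ^ 2 * a₀ ^ q) + (1 + r ^ 2 * a₁ ^ q))) := by
      rw [hg₀, hg₁]; ring
    rw [hdec]
    have hy0 : 0 ≤ r ^ 2 * a₀ ^ q := mul_nonneg (sq_nonneg r) h2
    have hy1 : 0 ≤ r ^ 2 * a₁ ^ q := mul_nonneg (sq_nonneg r) h2'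
    have hy0' : r ^ 2 * a₀ ^ q ≤ r ^ 2 * δ ^ q := mul_le_mul_of_nonneg_left h4 (sq_nonneg r)
    have hy1' : r ^ 2 * a₁ ^ q ≤ r ^ 2 * δ ^ q := mul_le_mul_of_nonneg_left h4' (sq_nonneg r)
    have e1 : |(a₀ ^ r - a₁ ^ r) * (1 + r ^ 2 * a₀ ^ q) ^ 2|
        ≤ (r * δ ^ (r - 1) * |a₀ - a₁|) * (1 + r ^ 2 * δ ^ q) ^ 2 := by
      rw [abs_mul]
      have hb : |(1 + r ^ 2 * a₀ ^ q) ^ 2| ≤ (1 + r ^ 2 * δ ^ q) ^ 2 := by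
        rw [abs_of_nonneg (sq_nonneg _)]
        exact pow_le_pow_left₀ (by linarith only [hy0]) (by linarith only [hy0']) 2
      exact mul_le_mul hPd hb (abs_nonneg _)
        (mul_nonneg (mul_nonneg (by linarith only [hr]) (Real.rpow_nonneg hδ.le _))
          (abs_nonneg _))
    have e2 : |(1 + a₁ ^ r) * ((r ^ 2 * (a₀ ^ q - a₁ ^ q))
          * ((1 + r ^ 2 * a₀ ^ q) + (1 + r ^ 2 * a₁ ^ q)))|
        ≤ (1 + δ ^ r) * ((r ^ 2 * (q * δ ^ (q - 1) * |a₀ - a₁|)) * (2 * (1 + r ^ 2 * δ ^ q))) := by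
      rw [abs_mul, abs_mul, abs_mul]
      have b1 : |1 + a₁ ^ r| ≤ 1 + δ ^ r := by
        rw [abs_of_nonneg (by linarith only [h1'])]; linarith only [h3']
      have b2 : |r ^ 2| * |a₀ ^ q - a₁ ^ q| ≤ r ^ 2 * (q * δ ^ (q - 1) * |a₀ - a₁|) := by
        rw [abs_of_nonneg (sq_nonneg r)]
        exact mul_le_mul_of_nonneg_left hQd (sq_nonneg r)
      have b3 : |(1 + r ^ 2 * a₀ ^ q) + (1 + r ^ 2 * a₁ ^ q)| ≤ 2 * (1 + r ^ 2 * δ ^ q) := by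
        rw [abs_of_nonneg (by linarith only [hy0, hy1])]; linarith only [hy0', hy1']
      have b23 : |r ^ 2| * |a₀ ^ q - a₁ ^ q| * |(1 + r ^ 2 * a₀ ^ q) + (1 + r ^ 2 * a₁ ^ q)|
          ≤ (r ^ 2 * (q * δ ^ (q - 1) * |a₀ - a₁|)) * (2 * (1 + r ^ 2 * δ ^ q)) :=
        mul_le_mul b2 b3 (abs_nonneg _)
          (mul_nonneg (sq_nonneg r) (mul_nonneg (mul_nonneg (by linarith only [hq1])
            (Real.rpow_nonneg hδ.le _)) (abs_nonneg _)))
      exact mul_le_mul b1 b23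
        (mul_nonneg (mul_nonneg (abs_nonneg _) (abs_nonneg _)) (abs_nonneg _))
        (by linarith only [hδr])
    refine le_trans (abs_add_le _ _) (le_trans (add_le_add e1 e2) (le_of_eq ?_))
    rw [hL]; ring
  -- Step A
  have hstepA : |neckCurv r a₀ - neckCurv r a₁| ≤ C₁ * m ^ (r - 3) * |a₀ - a₁| := by
    have hdec : neckCurv r a₀ - neckCurv r a₁
        = c * ((f₀ - f₁) / g₀) + c * (f₁ * ((g₁ - g₀) / (g₀ * g₁))) := by
      rw [hk₀, hk₁]
      field_simp
      ring
    have habs1 : |(f₀ - f₁) / g₀| ≤ |f₀ - f₁| := by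
      rw [abs_div, abs_of_pos hg₀pos]
      exact div_le_self (abs_nonneg _) hg₀1
    have habs2 : |(g₁ - g₀) / (g₀ * g₁)| ≤ |g₁ - g₀| := by
      rw [abs_div, abs_of_pos (mul_pos hg₀pos hg₁pos)]
      refine div_le_self (abs_nonneg _) ?_
      have := mul_le_mul hg₀1 hg₁1 zero_le_one (le_trans zero_le_one hg₀1)
      linarith only [this]
    have hgd' : |g₁ - g₀| ≤ L * |a₀ - a₁| := by rwa [abs_sub_comm]
    calc |neckCurv r a₀ - neckCurv r a₁|
        ≤ c * |(f₀ - f₁) / g₀| + c * (f₁ * |(g₁ - g₀) / (g₀ * g₁)|) := by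
          rw [hdec]
          refine le_trans (abs_add_le _ _) ?_
          rw [abs_mul c ((f₀ - f₁) / g₀), abs_mul c (f₁ * ((g₁ - g₀) / (g₀ * g₁))),
            abs_mul f₁ ((g₁ - g₀) / (g₀ * g₁)), abs_of_pos hcpos, abs_of_nonneg hf₁nn]
      _ ≤ c * ((r - 2) * m ^ (r - 3) * |a₀ - a₁|)
          + c * ((δ * m ^ (r - 3)) * (L * |a₀ - a₁|)) := by
          refine add_le_add (mul_le_mul_of_nonneg_left (habs1.trans hfdiff) hcpos.le)
            (mul_le_mul_of_nonneg_left ?_ hcpos.le)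
          exact mul_le_mul hf₁le (habs2.trans hgd') (abs_nonneg _)
            (mul_nonneg hδ.le hm3nn)
      _ = C₁ * m ^ (r - 3) * |a₀ - a₁| := by rw [hC₁]; ring
  -- Step B : m^(r-3) ≤ C₂ * K^θ
  set K : ℝ := max (neckCurv r a₀) (neckCurv r a₁) with hK
  have hKlb : c / Mg * m ^ (r - 2) ≤ K := by
    rcases le_total a₀ a₁ with h | h
    · have hmeq : m = a₁ := max_eq_right h
      have : c * f₁ / Mg ≤ c * f₁ / g₁ :=
        div_le_div_of_nonneg_left (mul_nonneg hcpos.le hf₁nn) hg₁pos hg₁M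
      calc c / Mg * m ^ (r - 2) = c * f₁ / Mg := by rw [hmeq]; rw [hf₁]; ring
        _ ≤ neckCurv r a₁ := by rw [hk₁]; exact this
        _ ≤ K := le_max_right _ _
    · have hmeq : m = a₀ := max_eq_left h
      have : c * f₀ / Mg ≤ c * f₀ / g₀ :=
        div_le_div_of_nonneg_left (mul_nonneg hcpos.le hf₀nn) hg₀pos hg₀M
      calc c / Mg * m ^ (r - 2) = c * f₀ / Mg := by rw [hmeq]; rw [hf₀]; ring
        _ ≤ neckCurv r a₀ := by rw [hk₀]; exact this
        _ ≤ K := le_max_left _ _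
  have hstepB : m ^ (r - 3) ≤ C₂ * K ^ θ := by
    have hdivnn : (0:ℝ) ≤ c / Mg := div_nonneg hcpos.le hMgpos.le
    have hlbnn : 0 ≤ c / Mg * m ^ (r - 2) := mul_nonneg hdivnn (Real.rpow_nonneg hmnn _)
    have h1 : (c / Mg * m ^ (r - 2)) ^ θ ≤ K ^ θ :=
      Real.rpow_le_rpow hlbnn hKlb hθpos.le
    have hexp : (r - 2) * θ = r - 3 := by
      rw [hθ]; field_simp
    have h2 : (c / Mg * m ^ (r - 2)) ^ θ = (c / Mg) ^ θ * m ^ (r - 3) := by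
      rw [Real.mul_rpow hdivnn (Real.rpow_nonneg hmnn _), ← Real.rpow_mul hmnn, hexp]
    rw [h2] at h1
    have hu : C₂ * (c / Mg) ^ θ = 1 := by
      rw [hC₂, ← Real.mul_rpow (div_nonneg hMgpos.le hcpos.le) hdivnn]
      have : Mg / c * (c / Mg) = 1 := by field_simp
      rw [this, Real.one_rpow]
    calc m ^ (r - 3) = C₂ * ((c / Mg) ^ θ * m ^ (r - 3)) := by
          rw [← mul_assoc, hu, one_mul]
      _ ≤ C₂ * K ^ θ := mul_le_mul_of_nonneg_left h1 hC₂pos.le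
  calc |neckCurv r a₀ - neckCurv r a₁| ≤ C₁ * m ^ (r - 3) * |a₀ - a₁| := hstepA
    _ ≤ C₁ * (C₂ * K ^ θ) * |a₀ - a₁| :=
        mul_le_mul_of_nonneg_right (mul_le_mul_of_nonneg_left hstepB hC₁pos.le) (abs_nonneg _)
    _ = C₁ * C₂ * K ^ θ * |a₀ - a₁| := by ring
end
end

section
/- For every real α > 1/r there exist constants C > 1 and b₀ ∈ (0,1) such that for all c ∈ (1 − b₀, 1): C^{-1}·(1−c)^{-α} ≤ ∫_0^{ε₁} (ξ(s) − c)^{-α} ds ≤ C·(1−c)^{-α}. -/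
open MeasureTheory Set Real

noncomputable section

/-- The profile of the surface of revolution: `ξ(s) = 1` for `s ≤ L` and
`ξ(s) = 1 + (s-L)^r` for `s ≥ L`. -/
def profileXi (r L : ℝ) (s : ℝ) : ℝ := if s ≤ L then 1 else 1 + (s - L) ^ r

/-- Integral asymptotics used in the proof of Lemma 3.2(3): for `α > 1/r`,
`∫₀^{ε₁} (ξ(s) - c)^{-α} ds ≈ (1-c)^{-α}` as `c ↑ 1`. -/
theorem profile_integral_asymptotics
    (r L ε₁ : ℝ) (hr : 4 < r) (hL : 0 < L) (hLε : L < ε₁)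
    (α : ℝ) (hα : 1 / r < α) :
    ∃ C : ℝ, 1 < C ∧ ∃ b₀ : ℝ, b₀ ∈ Set.Ioo (0:ℝ) 1 ∧
      ∀ c ∈ Set.Ioo (1 - b₀) 1,
        (1 - c) ^ (-α) / C ≤ (∫ s in (0:ℝ)..ε₁, (profileXi r L s - c) ^ (-α)) ∧
        (∫ s in (0:ℝ)..ε₁, (profileXi r L s - c) ^ (-α)) ≤ C * (1 - c) ^ (-α) := by
  have hr0 : (0:ℝ) < r := by linarith
  have hα0 : 0 < α := lt_trans (by positivity) hα
  have hε0 : 0 < ε₁ := hL.trans hLε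
  have hXi1 : ∀ s, 1 ≤ profileXi r L s := by
    intro s
    unfold profileXi
    split_ifs with h
    · exact le_refl 1
    · have hs : 0 ≤ s - L := by push_neg at h; linarith
      have := Real.rpow_nonneg hs r
      linarith
  have hcont : Continuous (profileXi r L) := by
    unfold profileXi
    apply Continuous.if_le continuous_const
      (continuous_const.add ((continuous_id.sub continuous_const).rpow_const
        (fun x => Or.inr hr0.le))) continuous_id continuous_const
    intro x hx
    simp only [id_eq] at hx
    rw [hx]
    simp [Real.zero_rpow hr0.ne']
  set C : ℝ := max ε₁ (1 / L) + 1 with hC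
  have hCpos : 0 < max ε₁ (1 / L) := lt_max_of_lt_left hε0
  have hC1 : 1 < C := by simp only [hC]; linarith
  have hCε : ε₁ ≤ C := by have := le_max_left ε₁ (1/L); simp only [hC]; linarith
  have hCL : 1 / C ≤ L := by
    have h1 : 1 / L ≤ C := by have := le_max_right ε₁ (1/L); simp only [hC]; linarith
    have := one_div_le_one_div_of_le (by positivity : (0:ℝ) < 1 / L) h1
    rwa [one_div_one_div] at this
  refine ⟨C, hC1, 1/2, ⟨by norm_num, by norm_num⟩, ?_⟩
  intro c hc
  obtain ⟨hc1, hc2⟩ := hc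
  have hb : 0 < 1 - c := by linarith
  set g : ℝ → ℝ := fun s => (profileXi r L s - c) ^ (-α) with hg
  have hpos : ∀ s, 0 < profileXi r L s - c := fun s => by have := hXi1 s; linarith
  have hgle : ∀ s, g s ≤ (1 - c) ^ (-α) := fun s =>
    Real.rpow_le_rpow_of_nonpos hb (by have := hXi1 s; linarith) (by linarith)
  have hgnn : ∀ s, 0 ≤ g s := fun s => Real.rpow_nonneg (hpos s).le _
  have hgcont : Continuous g :=
    (hcont.sub continuous_const).rpow_const (fun s => Or.inl (hpos s).ne')
  have hgmeas : Measurable g := hgcont.measurable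
  have hint : IntegrableOn g (Ioc 0 ε₁) := by
    have hconst : IntegrableOn (fun _ : ℝ => (1 - c) ^ (-α)) (Ioc 0 ε₁) volume :=
      integrableOn_const measure_Ioc_lt_top.ne
    apply Integrable.mono' hconst hgmeas.aestronglyMeasurable
    filter_upwards with s
    rw [Real.norm_eq_abs, abs_of_nonneg (hgnn s)]
    exact hgle s
  have hIoc : (∫ s in (0:ℝ)..ε₁, g s) = ∫ s in Ioc 0 ε₁, g s :=
    intervalIntegral.integral_of_le hε0.le
  have hbpos : 0 < (1 - c) ^ (-α) := Real.rpow_pos_of_pos hb _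
  constructor
  · -- lower bound
    have h1 : (∫ s in Ioc 0 L, g s) = L * (1 - c) ^ (-α) := by
      have heq : ∀ s ∈ Ioc (0:ℝ) L, g s = (1 - c) ^ (-α) := fun s hs => by
        simp [hg, profileXi, hs.2]
      rw [setIntegral_congr_fun measurableSet_Ioc heq, setIntegral_const]
      simp [Real.volume_Ioc, ENNReal.toReal_ofReal hL.le, smul_eq_mul, hL.le]
    have h2 : (∫ s in Ioc 0 L, g s) ≤ ∫ s in Ioc 0 ε₁, g s := by
      apply setIntegral_mono_set hint
      · filter_upwards with s using hgnn s
      · exact (Ioc_subset_Ioc le_rfl hLε.le).eventuallyLE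
    rw [hIoc]
    have h3 : (1 - c) ^ (-α) / C ≤ L * (1 - c) ^ (-α) := by
      rw [div_eq_mul_one_div, mul_comm]
      exact mul_le_mul_of_nonneg_right hCL hbpos.le |>.trans_eq rfl
    linarith
  · -- upper bound
    rw [hIoc]
    have h4 : (∫ s in Ioc 0 ε₁, g s) ≤ ∫ s in Ioc 0 ε₁, (1 - c) ^ (-α) := by
      have hconst : IntegrableOn (fun _ : ℝ => (1 - c) ^ (-α)) (Ioc 0 ε₁) volume :=
        integrableOn_const measure_Ioc_lt_top.ne
      apply setIntegral_mono_on hint hconst measurableSet_Ioc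
      intro s _
      exact hgle s
    rw [setIntegral_const] at h4
    have : (volume (Ioc (0:ℝ) ε₁)).toReal = ε₁ := by
      simp [Real.volume_Ioc, ENNReal.toReal_ofReal hε0.le]
    rw [measureReal_def, this, smul_eq_mul] at h4
    calc (∫ s in Ioc 0 ε₁, g s) ≤ ε₁ * (1 - c) ^ (-α) := h4
      _ ≤ C * (1 - c) ^ (-α) := mul_le_mul_of_nonneg_right hCε hbpos.le
end
end

section
/- Let L > 0. There exist constants C > 0 and n₀ ≥ 1 such that for all integers n ≥ n₀, |∫_{I_n} sin ψ dψ − (L²/π²)·n^{-3}| ≤ C·n^{-4}, where I_n = {ψ ∈ (0, π/2) : L/((n+1)π) < tan ψ ≤ L/(nπ)}. Equivalently, |cos(arctan(L/((n+1)π))) − cos(arctan(L/(nπ))) − (L²/π²)·n^{-3}| ≤ C·n^{-4}. -/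
open MeasureTheory Set Real

lemma inv_sqrt_lo (u : ℝ) (h0 : 0 ≤ u) (h1 : u ≤ 1) :
    1 - u / 2 ≤ (Real.sqrt (1 + u))⁻¹ := by
  have hs : 0 < Real.sqrt (1 + u) := Real.sqrt_pos.mpr (by linarith)
  have hsq : Real.sqrt (1 + u) ^ 2 = 1 + u := Real.sq_sqrt (by linarith)
  set s := Real.sqrt (1 + u)
  rw [inv_eq_one_div, le_div_iff₀ hs]
  have hp2 : ((1 - u / 2) * s) ^ 2 ≤ 1 := by
    have : ((1 - u / 2) * s) ^ 2 = (1 - u / 2) ^ 2 * (1 + u) := by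
      rw [mul_pow, hsq]
    rw [this]
    nlinarith [mul_nonneg (mul_nonneg h0 h0) (show (0:ℝ) ≤ 1 - u by linarith)]
  nlinarith [hp2, sq_nonneg ((1 - u / 2) * s - 1)]

lemma inv_sqrt_hi (u : ℝ) (h0 : 0 ≤ u) :
    (Real.sqrt (1 + u))⁻¹ ≤ 1 - u / 2 + u ^ 2 := by
  have hs : 0 < Real.sqrt (1 + u) := Real.sqrt_pos.mpr (by linarith)
  have hsq : Real.sqrt (1 + u) ^ 2 = 1 + u := Real.sq_sqrt (by linarith)
  set s := Real.sqrt (1 + u)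
  rw [inv_eq_one_div, div_le_iff₀ hs]
  have hq0 : 0 ≤ (1 - u / 2 + u ^ 2) * s := by
    apply mul_nonneg _ hs.le
    nlinarith [sq_nonneg (u - 1)]
  have hq2 : 1 ≤ ((1 - u / 2 + u ^ 2) * s) ^ 2 := by
    have : ((1 - u / 2 + u ^ 2) * s) ^ 2 = (1 - u / 2 + u ^ 2) ^ 2 * (1 + u) := by
      rw [mul_pow, hsq]
    rw [this]
    nlinarith [sq_nonneg u, mul_nonneg (mul_nonneg h0 h0) h0,
      mul_nonneg (mul_nonneg (mul_nonneg h0 h0) h0) (mul_nonneg h0 h0)]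
  nlinarith [hq0, hq2]

lemma cos_arctan_approx (x : ℝ) (h0 : 0 ≤ x) (h1 : x ≤ 1) :
    |Real.cos (Real.arctan x) - (1 - x ^ 2 / 2)| ≤ x ^ 4 := by
  have hu0 : 0 ≤ x ^ 2 := sq_nonneg x
  have hu1 : x ^ 2 ≤ 1 := by nlinarith
  have hlo := inv_sqrt_lo (x ^ 2) hu0 hu1
  have hhi := inv_sqrt_hi (x ^ 2) hu0
  rw [Real.cos_arctan, one_div, abs_le]
  constructor <;> nlinarith [sq_nonneg x]

lemma main_est (c : ℝ) (hc : 0 < c) (n : ℕ) (hn : 1 ≤ n) (hcn : c ≤ (n : ℝ)) :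
    |Real.cos (Real.arctan (c / ((n : ℝ) + 1))) - Real.cos (Real.arctan (c / (n : ℝ))) -
      c ^ 2 * ((n : ℝ) ^ 3)⁻¹| ≤ (2 * c ^ 4 + 2 * c ^ 2) * ((n : ℝ) ^ 4)⁻¹ := by
  have hN : (1 : ℝ) ≤ (n : ℝ) := by exact_mod_cast hn
  have hN0 : (0 : ℝ) < (n : ℝ) := by linarith
  have hN1 : (0 : ℝ) < (n : ℝ) + 1 := by linarith
  set N := (n : ℝ)
  set a := c / N with ha
  set b := c / (N + 1) with hb
  have ha0 : 0 ≤ a := le_of_lt (div_pos hc hN0)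
  have hb0 : 0 ≤ b := le_of_lt (div_pos hc hN1)
  have ha1 : a ≤ 1 := by rw [ha, div_le_one hN0]; exact hcn
  have hba : b ≤ a := by
    rw [ha, hb, div_le_div_iff₀ hN1 hN0]; nlinarith
  have hb1 : b ≤ 1 := hba.trans ha1
  have h1 := cos_arctan_approx b hb0 hb1
  have h2 := cos_arctan_approx a ha0 ha1
  have h3 : |(a ^ 2 - b ^ 2) / 2 - c ^ 2 * (N ^ 3)⁻¹| ≤ 2 * c ^ 2 * (N ^ 4)⁻¹ := by
    have heq : (a ^ 2 - b ^ 2) / 2 - c ^ 2 * (N ^ 3)⁻¹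
        = -(c ^ 2 * (3 * N + 2) / (2 * N ^ 3 * (N + 1) ^ 2)) := by
      rw [ha, hb]; field_simp; ring
    have hnn : 0 ≤ c ^ 2 * (3 * N + 2) / (2 * N ^ 3 * (N + 1) ^ 2) :=
      div_nonneg (by nlinarith [sq_nonneg c]) (by positivity)
    have hr : 2 * c ^ 2 * (N ^ 4)⁻¹ = 2 * c ^ 2 / N ^ 4 := by rw [div_eq_mul_inv]
    rw [heq, abs_neg, abs_of_nonneg hnn, hr,
      div_le_div_iff₀ (by positivity) (by positivity)]
    nlinarith [mul_nonneg (sq_nonneg c) (pow_nonneg hN0.le 5),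
      mul_nonneg (sq_nonneg c) (pow_nonneg hN0.le 4),
      mul_nonneg (sq_nonneg c) (pow_nonneg hN0.le 3)]
  have ha4 : a ^ 4 = c ^ 4 * (N ^ 4)⁻¹ := by rw [ha]; field_simp
  have hb4 : b ^ 4 ≤ c ^ 4 * (N ^ 4)⁻¹ := by
    rw [← ha4]; exact pow_le_pow_left₀ hb0 hba 4
  have hkey : Real.cos (Real.arctan b) - Real.cos (Real.arctan a) - c ^ 2 * (N ^ 3)⁻¹
      = (Real.cos (Real.arctan b) - (1 - b ^ 2 / 2)) - (Real.cos (Real.arctan a) - (1 - a ^ 2 / 2))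
        + ((a ^ 2 - b ^ 2) / 2 - c ^ 2 * (N ^ 3)⁻¹) := by ring
  set P := Real.cos (Real.arctan b) - (1 - b ^ 2 / 2)
  set Q := Real.cos (Real.arctan a) - (1 - a ^ 2 / 2)
  set Z := (a ^ 2 - b ^ 2) / 2 - c ^ 2 * (N ^ 3)⁻¹
  rw [hkey]
  have t1 : |P - Q + Z| ≤ |P - Q| + |Z| := abs_add_le _ _
  have t2 : |P - Q| ≤ |P| + |Q| := by
    calc |P - Q| = |P + -Q| := by rw [sub_eq_add_neg]
      _ ≤ |P| + |-Q| := abs_add_le _ _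
      _ = |P| + |Q| := by rw [abs_neg]
  have ha4' : a ^ 4 ≤ c ^ 4 * (N ^ 4)⁻¹ := le_of_eq ha4
  linarith

/-- Computation underlying Lemma 7.3(1): integrating the flux density `sin ψ` over the
band `I_n = {ψ ∈ (0, π/2) : L/((n+1)π) < tan ψ ≤ L/(nπ)}` yields
`(L²/π²) n⁻³ + O(n⁻⁴)`; equivalently
`cos(arctan(L/((n+1)π))) - cos(arctan(L/(nπ))) = (L²/π²) n⁻³ + O(n⁻⁴)`. -/
theorem flux_band_integral_asymptotics (L : ℝ) (hL : 0 < L) :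
    ∃ C : ℝ, 0 < C ∧ ∃ n₀ : ℕ, 1 ≤ n₀ ∧ ∀ n : ℕ, n₀ ≤ n →
      |(∫ ψ in {ψ : ℝ | ψ ∈ Set.Ioo 0 (π / 2) ∧
            L / (((n : ℝ) + 1) * π) < Real.tan ψ ∧ Real.tan ψ ≤ L / ((n : ℝ) * π)},
          Real.sin ψ) - L ^ 2 / π ^ 2 * ((n : ℝ) ^ 3)⁻¹| ≤ C * ((n : ℝ) ^ 4)⁻¹ ∧
      |Real.cos (Real.arctan (L / (((n : ℝ) + 1) * π))) -
          Real.cos (Real.arctan (L / ((n : ℝ) * π))) -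
          L ^ 2 / π ^ 2 * ((n : ℝ) ^ 3)⁻¹| ≤ C * ((n : ℝ) ^ 4)⁻¹ := by
  have hπ : (0 : ℝ) < π := Real.pi_pos
  set c : ℝ := L / π with hc_def
  have hc : 0 < c := div_pos hL hπ
  refine ⟨2 * c ^ 4 + 2 * c ^ 2, by positivity, max 1 ⌈c⌉₊, le_max_left _ _, ?_⟩
  intro n hn
  have hn1 : 1 ≤ n := le_trans (le_max_left _ _) hn
  have hcn : c ≤ (n : ℝ) := by
    have h1 : ⌈c⌉₊ ≤ n := le_trans (le_max_right _ _) hn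
    calc c ≤ (⌈c⌉₊ : ℝ) := Nat.le_ceil c
      _ ≤ (n : ℝ) := by exact_mod_cast h1
  have hN0 : (0 : ℝ) < (n : ℝ) := by exact_mod_cast hn1
  have hN1 : (0 : ℝ) < (n : ℝ) + 1 := by linarith
  have hrw1 : L / (((n : ℝ) + 1) * π) = c / ((n : ℝ) + 1) := by
    rw [hc_def, div_div, mul_comm]
  have hrw2 : L / ((n : ℝ) * π) = c / (n : ℝ) := by
    rw [hc_def, div_div, mul_comm]
  have hrw3 : L ^ 2 / π ^ 2 = c ^ 2 := by
    rw [hc_def, div_pow]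
  have hB := main_est c hc n hn1 hcn
  rw [hrw1, hrw2, hrw3]
  refine ⟨?_, hB⟩
  set a := c / (n : ℝ) with ha
  set b := c / ((n : ℝ) + 1) with hb
  have ha0 : 0 < a := div_pos hc hN0
  have hb0 : 0 < b := div_pos hc hN1
  have hba : b < a := by
    rw [ha, hb, div_lt_div_iff₀ hN1 hN0]; nlinarith
  have hlu : Real.arctan b ≤ Real.arctan a := (Real.arctan_strictMono hba).le
  have hset : {ψ : ℝ | ψ ∈ Set.Ioo 0 (π / 2) ∧ b < Real.tan ψ ∧ Real.tan ψ ≤ a}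
      = Set.Ioc (Real.arctan b) (Real.arctan a) := by
    ext ψ
    simp only [Set.mem_setOf_eq, Set.mem_Ioo, Set.mem_Ioc]
    constructor
    · rintro ⟨⟨hψ0, hψ2⟩, h3, h4⟩
      have ht : Real.arctan (Real.tan ψ) = ψ := Real.arctan_tan (by linarith) hψ2
      constructor
      · calc Real.arctan b < Real.arctan (Real.tan ψ) := Real.arctan_strictMono h3
          _ = ψ := ht
      · calc ψ = Real.arctan (Real.tan ψ) := ht.symm
          _ ≤ Real.arctan a := Real.arctan_strictMono.monotone h4
    · rintro ⟨h1, h2⟩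
      have hψ0 : 0 < ψ := by
        have h := Real.arctan_strictMono hb0
        rw [Real.arctan_zero] at h
        linarith
      have hψ2 : ψ < π / 2 := lt_of_le_of_lt h2 (Real.arctan_lt_pi_div_two a)
      have ht : Real.arctan (Real.tan ψ) = ψ := Real.arctan_tan (by linarith) hψ2
      refine ⟨⟨hψ0, hψ2⟩, ?_, ?_⟩
      · have h' : Real.arctan b < Real.arctan (Real.tan ψ) := by rw [ht]; exact h1
        exact Real.arctan_strictMono.lt_iff_lt.mp h'
      · have h' : Real.arctan (Real.tan ψ) ≤ Real.arctan a := by rw [ht]; exact h2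
        exact Real.arctan_strictMono.le_iff_le.mp h'
  rw [hset]
  have hint : (∫ ψ in Set.Ioc (Real.arctan b) (Real.arctan a), Real.sin ψ)
      = Real.cos (Real.arctan b) - Real.cos (Real.arctan a) := by
    rw [← intervalIntegral.integral_of_le hlu, integral_sin]
  rw [hint]
  exact hB
end
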